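/- arXiv:2403.02717 — 6 statements merged into one kernel-verified Lean document; each statement's English description precedes it below -/
import Mathlib

section
/- Let n ≥ 2, let A be a linear subspace of ℝ^n of dimension d ∈ [1, n−1], let e ∈ [1, n−1] and let j ∈ [1, min(d,e) − g(d,e,n)]. Then A is (e,j)-irrational if and only if the orthogonal complement A^⊥ (with respect to the standard inner product on ℝ^n) is (n−e, j)-irrational. -/
noncomputable section

/-- A subspace of `ℝ^n` is rational if it is spanned by vectors with rational coordinates. -/
def IsRationalSubspace {n : ℕ} (B : Submodule ℝ (EuclideanSpace ℝ (Fin n))) : Prop :=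
  ∃ s : Set (EuclideanSpace ℝ (Fin n)),
    (∀ v ∈ s, ∀ i, ∃ q : ℚ, v i = (q : ℝ)) ∧ Submodule.span ℝ s = B

/-- `A` is `(e, j)`-irrational: every rational subspace `B` of dimension `e` satisfies
`dim (A ∩ B) < j + max 0 (dim A + e - n)` (here `dim A + e - n` is truncated
subtraction, which equals `max 0 (dim A + e - n)`). -/
def IsIrrational {n : ℕ} (A : Submodule ℝ (EuclideanSpace ℝ (Fin n))) (e j : ℕ) : Prop :=
  ∀ B : Submodule ℝ (EuclideanSpace ℝ (Fin n)),
    IsRationalSubspace B → Module.finrank ℝ B = e →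
      Module.finrank ℝ ↥(A ⊓ B) < j + (Module.finrank ℝ A + e - n)

/-!
Rationality is preserved by orthogonal complements: if `B` is the real span of a `ℚ`-subspace
`W ⊆ ℚⁿ`, then `Bᗮ` is the real span of the dot-product orthogonal of `W` in `ℚⁿ`, because
rational vectors that are independent over `ℚ` stay independent over `ℝ`. So `B ↦ Bᗮ` is a
bijection between rational subspaces of dimensions `e` and `n - e`, and the identity
`dim (Aᗮ ⊓ Bᗮ) + dim A + dim B = dim (A ⊓ B) + n` gives
`dim (A ⊓ B) - g(d, e, n) = dim (Aᗮ ⊓ Bᗮ) - g(n - d, n - e, n)`.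
-/

open Module Submodule

def ratToEuclidean (n : ℕ) : (Fin n → ℚ) →ₗ[ℚ] EuclideanSpace ℝ (Fin n) :=
  ((WithLp.linearEquiv 2 ℝ (Fin n → ℝ)).symm.toLinearMap.restrictScalars ℚ).comp
    ((Algebra.linearMap ℚ ℝ).compLeft (Fin n))

section

variable {n : ℕ}

@[simp]
theorem ratToEuclidean_apply (q : Fin n → ℚ) (i : Fin n) : ratToEuclidean n q i = q i := rfl

theorem inner_ratToEuclidean (p q : Fin n → ℚ) :
    inner ℝ (ratToEuclidean n p) (ratToEuclidean n q) = ((p ⬝ᵥ q : ℚ) : ℝ) := by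
  simp [PiLp.inner_apply, dotProduct, mul_comm]

theorem LinearIndependent.ratToEuclidean {ι : Type*} {v : ι → Fin n → ℚ}
    (hv : LinearIndependent ℚ v) : LinearIndependent ℝ (ratToEuclidean n ∘ v) := by
  have h : LinearIndependent ℝ (fun i ↦ algebraMap ℚ ℝ ∘ v i) :=
    linearIndependent_algebraMap_comp_iff.mpr hv
  exact h.map' (WithLp.linearEquiv 2 ℝ (Fin n → ℝ)).symm.toLinearMap (LinearEquiv.ker _)

theorem finrank_span_image_ratToEuclidean (W : Submodule ℚ (Fin n → ℚ)) :
    finrank ℝ (span ℝ (ratToEuclidean n '' W)) = finrank ℚ W := by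
  let b := finBasis ℚ W
  have hv : LinearIndependent ℚ (W.subtype ∘ b) := b.linearIndependent.map' _ W.ker_subtype
  have hW : span ℚ (Set.range (W.subtype ∘ b)) = W := by
    rw [Set.range_comp, ← map_span, b.span_eq, Submodule.map_top, range_subtype]
  have hspan : span ℝ (ratToEuclidean n '' W) =
      span ℝ (Set.range (ratToEuclidean n ∘ W.subtype ∘ b)) := by
    conv_lhs => rw [← hW, ← map_coe, map_span, span_span_of_tower]
    rw [← Set.range_comp]
  rw [hspan, finrank_span_eq_card hv.ratToEuclidean, Fintype.card_fin]

theorem isRationalSubspace_iff {B : Submodule ℝ (EuclideanSpace ℝ (Fin n))} :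
    IsRationalSubspace B ↔ ∃ W : Submodule ℚ (Fin n → ℚ), span ℝ (ratToEuclidean n '' W) = B := by
  constructor
  · rintro ⟨s, hs, rfl⟩
    refine ⟨((span ℝ s).restrictScalars ℚ).comap (ratToEuclidean n), ?_⟩
    refine le_antisymm (span_le.mpr ?_) (span_mono fun v hv ↦ ?_)
    · rintro _ ⟨q, hq, rfl⟩
      exact hq
    choose q hq using hs v hv
    have hv' : ratToEuclidean n q = v := by ext i; exact (hq i).symm
    exact ⟨q, by simpa [hv'] using subset_span hv, hv'⟩
  · rintro ⟨W, rfl⟩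
    exact ⟨_, by rintro _ ⟨q, -, rfl⟩ i; exact ⟨q i, rfl⟩, rfl⟩

theorem orthogonal_span_image_ratToEuclidean (W : Submodule ℚ (Fin n → ℚ)) :
    (span ℝ (ratToEuclidean n '' W))ᗮ =
      span ℝ (ratToEuclidean n '' LinearMap.BilinForm.orthogonal (dotProductBilin ℚ ℚ) W) := by
  symm
  apply eq_of_le_of_finrank_le
  · rw [← isOrtho_iff_le, isOrtho_span]
    rintro _ ⟨q, hq, rfl⟩ _ ⟨p, hp, rfl⟩
    have hpq : p ⬝ᵥ q = 0 := hq p hp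
    rw [inner_ratToEuclidean, dotProduct_comm, hpq, Rat.cast_zero]
  · have hℝ := (span ℝ (ratToEuclidean n '' W)).finrank_add_finrank_orthogonal
    have hℚ := LinearMap.BilinForm.finrank_add_finrank_orthogonal (B := dotProductBilin ℚ ℚ)
      (fun p q h ↦ by simpa [dotProduct_comm] using h) W
    simp only [finrank_span_image_ratToEuclidean, finrank_euclideanSpace_fin,
      finrank_fin_fun] at hℝ hℚ ⊢
    omega

theorem IsRationalSubspace.orthogonal {B : Submodule ℝ (EuclideanSpace ℝ (Fin n))}
    (hB : IsRationalSubspace B) : IsRationalSubspace Bᗮ := by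
  obtain ⟨W, rfl⟩ := isRationalSubspace_iff.mp hB
  exact isRationalSubspace_iff.mpr ⟨_, (orthogonal_span_image_ratToEuclidean W).symm⟩

theorem Submodule.finrank_orthogonal_inf_orthogonal_add {𝕜 E : Type*} [RCLike 𝕜]
    [NormedAddCommGroup E] [InnerProductSpace 𝕜 E] [FiniteDimensional 𝕜 E]
    (A B : Submodule 𝕜 E) :
    finrank 𝕜 ↥(Aᗮ ⊓ Bᗮ) + (finrank 𝕜 A + finrank 𝕜 B) = finrank 𝕜 ↥(A ⊓ B) + finrank 𝕜 E := by
  have hsup := finrank_add_finrank_orthogonal (A ⊔ B)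
  have hinf := finrank_sup_add_finrank_inf_eq A B
  rw [inf_orthogonal]
  omega

theorem IsIrrational.orthogonal {A : Submodule ℝ (EuclideanSpace ℝ (Fin n))} {e j : ℕ}
    (h : IsIrrational A e j) (he : e ≤ n) : IsIrrational Aᗮ (n - e) j := by
  intro B hB hBe
  have hA := A.finrank_add_finrank_orthogonal
  have hB' := B.finrank_add_finrank_orthogonal
  have hAB := finrank_orthogonal_inf_orthogonal_add A Bᗮ
  rw [orthogonal_orthogonal] at hAB
  have hle : finrank ℝ ↥(A ⊓ Bᗮ) ≤ finrank ℝ A := finrank_mono inf_le_left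
  rw [finrank_euclideanSpace_fin] at hA hB' hAB
  have hirr := h Bᗮ hB.orthogonal (by omega)
  omega

end

theorem orthogonal_irrational_iff_general (n : ℕ)
    (A : Submodule ℝ (EuclideanSpace ℝ (Fin n))) (e j : ℕ)
    (he2 : e ≤ n - 1) :
    IsIrrational A e j ↔ IsIrrational Aᗮ (n - e) j := by
  refine ⟨fun h ↦ h.orthogonal (by omega), fun h ↦ ?_⟩
  have h' := h.orthogonal (Nat.sub_le n e)
  rwa [orthogonal_orthogonal, Nat.sub_sub_self (by omega)] at h'

/-- A subspace `A` of `ℝ^n` of dimension `d ∈ [1, n-1]` is `(e, j)`-irrational if and only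
if its orthogonal complement `Aᗮ` is `(n-e, j)`-irrational, for `e ∈ [1, n-1]` and
`j ∈ [1, min d e - max 0 (d + e - n)]`. -/
theorem orthogonal_irrational_iff (n : ℕ) (hn : 2 ≤ n)
    (A : Submodule ℝ (EuclideanSpace ℝ (Fin n))) (d e j : ℕ)
    (hA : Module.finrank ℝ A = d) (hd1 : 1 ≤ d) (hd2 : d ≤ n - 1)
    (he1 : 1 ≤ e) (he2 : e ≤ n - 1)
    (hj1 : 1 ≤ j) (hj2 : j ≤ min d e - (d + e - n)) :
    IsIrrational A e j ↔ IsIrrational Aᗮ (n - e) j :=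
  orthogonal_irrational_iff_general n A e j he2
end
end

section
/- Let e ≥ 0 be an integer, θ ∈ ℕ with θ ≥ 2, and let α = (α_k)_{k∈ℕ} be a sequence of positive reals for which there exists a constant c > 1 with α_{k+1} > c·α_k for all k. Let J be a finite set of positive integers with at least 2 elements and let F ⊆ ℝ be a finite set. Let φ : ℕ → {0,…,e} be a map all of whose fibers φ^{-1}({i}) are infinite. Then there exist e+1 sequences (u_k^i)_{i∈{0,…,e}, k∈ℕ} of natural numbers such that for all i and k, u_k^i ∈ J if φ(k) = i and u_k^i = 0 otherwise, and such that the family of real numbers (Σ_{k=0}^{∞} u_k^i / θ^{⌊α_k⌋})_{i∈{0,…,e}} is algebraically independent over the subfield ℚ(F) of ℝ generated by F. -/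
open Filter Cardinal


private lemma exists_gap (α : ℕ → ℝ) (hαpos : ∀ k, 0 < α k) (c : ℝ) (hc : 1 < c)
    (hα : ∀ k, c * α k < α (k+1)) (L : ℕ) :
    ∃ N : ℕ, ∀ k, N ≤ k → α k + L ≤ α (k+1) := by
  have hgrow : ∀ k, α 0 * c ^ k ≤ α k := by
    intro k; induction k with
    | zero => simp
    | succ n ih =>
      have h1 : α 0 * c ^ (n+1) = (α 0 * c ^ n) * c := by ring
      nlinarith [hα n, hαpos n, pow_pos (show (0:ℝ) < c by linarith) n, hαpos 0]
  have ht : Tendsto (fun k => α 0 * c ^ k) atTop atTop :=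
    (tendsto_pow_atTop_atTop_of_one_lt hc).const_mul_atTop (hαpos 0)
  have h2 : ∀ᶠ k in atTop, (L : ℝ) / (c - 1) ≤ α k :=
    (ht.eventually_ge_atTop _).mono (fun k hk => le_trans hk (hgrow k))
  obtain ⟨N, hN⟩ := eventually_atTop.1 h2
  refine ⟨N, fun k hk => ?_⟩
  have h3 := hN k hk
  have h4 : (L:ℝ) ≤ α k * (c - 1) := (div_le_iff₀ (by linarith)).1 h3
  nlinarith [hα k]


private lemma floor_gap (α : ℕ → ℝ) (hαpos : ∀ k, 0 < α k) (N L : ℕ)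
    (hgap : ∀ k, N ≤ k → α k + L ≤ α (k+1)) :
    ∀ k, N ≤ k → ∀ j, ⌊α k⌋₊ + j * L ≤ ⌊α (k + j)⌋₊ := by
  have key : ∀ k, N ≤ k → ∀ j, α k + (j * L : ℕ) ≤ α (k + j) := by
    intro k hk j
    induction j with
    | zero => simp
    | succ n ih =>
      have h1 := hgap (k + n) (le_trans hk (Nat.le_add_right _ _))
      have : ((n+1) * L : ℕ) = ((n * L : ℕ) : ℝ) + (L:ℝ) := by push_cast; ring
      rw [this, show k + (n+1) = (k + n) + 1 from rfl]
      linarith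
  intro k hk j
  have h1 := key k hk j
  calc ⌊α k⌋₊ + j * L = ⌊α k + ((j * L : ℕ) : ℝ)⌋₊ := by
        rw [Nat.floor_add_natCast (le_of_lt (hαpos k))]
    _ ≤ ⌊α (k + j)⌋₊ := Nat.floor_le_floor h1

private lemma pow_floor_ge (θ : ℕ) (hθ : 2 ≤ θ) (α : ℕ → ℝ) (hαpos : ∀ k, 0 < α k)
    (N L : ℕ) (hL : 1 ≤ L) (hgap : ∀ k, N ≤ k → α k + L ≤ α (k+1)) :
    ∀ k, (θ:ℝ) ^ k ≤ (θ:ℝ) ^ ⌊α k⌋₊ * (θ:ℝ) ^ N := by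
  have hθ1 : (1:ℝ) ≤ (θ:ℝ) := by exact_mod_cast le_trans (by norm_num) hθ
  intro k
  rcases le_or_gt k N with h | h
  · calc (θ:ℝ)^k ≤ (θ:ℝ)^N := pow_le_pow_right₀ hθ1 h
      _ ≤ (θ:ℝ)^⌊α k⌋₊ * (θ:ℝ)^N := le_mul_of_one_le_left (by positivity) (one_le_pow₀ hθ1)
  · have h2 : ⌊α N⌋₊ + (k - N) * L ≤ ⌊α k⌋₊ := by
      have := floor_gap α hαpos N L hgap N le_rfl (k - N)
      rwa [Nat.add_sub_cancel' (le_of_lt h)] at this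
    have h3 : k - N ≤ ⌊α k⌋₊ := le_trans (by calc k - N = (k-N)*1 := by ring
        _ ≤ (k-N)*L := Nat.mul_le_mul_left _ hL
        _ ≤ ⌊α N⌋₊ + (k-N)*L := Nat.le_add_left _ _) h2
    calc (θ:ℝ)^k = (θ:ℝ)^(k - N) * (θ:ℝ)^N := by
          rw [← pow_add, Nat.sub_add_cancel (le_of_lt h)]
      _ ≤ (θ:ℝ)^⌊α k⌋₊ * (θ:ℝ)^N := by
          have h5 := pow_le_pow_right₀ hθ1 h3
          have h6 : (0:ℝ) ≤ (θ:ℝ)^N := by positivity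
          nlinarith

private lemma summable_aux (θ : ℕ) (hθ : 2 ≤ θ) (α : ℕ → ℝ) (hαpos : ∀ k, 0 < α k)
    (N L : ℕ) (hL : 1 ≤ L) (hgap : ∀ k, N ≤ k → α k + L ≤ α (k+1))
    (b : ℕ) (u : ℕ → ℕ) (hu : ∀ k, u k ≤ b) :
    Summable (fun k => (u k : ℝ) / (θ:ℝ) ^ ⌊α k⌋₊) := by
  have hθ0 : (0:ℝ) < (θ:ℝ) := by positivity -- θ could be 0? no θ ≥ 2
  have hθ2 : (2:ℝ) ≤ (θ:ℝ) := by exact_mod_cast hθ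
  have hg : Summable (fun k : ℕ => ((b:ℝ) * (θ:ℝ)^N) * ((1:ℝ)/θ)^k) := by
    apply Summable.mul_left
    apply summable_geometric_of_lt_one (by positivity : (0:ℝ) ≤ 1/(θ:ℝ))
    rw [div_lt_one (by linarith)]; linarith
  apply Summable.of_nonneg_of_le (fun k => by positivity) (fun k => ?_) hg
  have h1 := pow_floor_ge θ hθ α hαpos N L hL hgap k
  have h2 : (0:ℝ) < (θ:ℝ)^⌊α k⌋₊ := by positivity
  have h3 : (0:ℝ) < (θ:ℝ)^k := by positivity
  rw [div_le_iff₀ h2]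
  have : ((b:ℝ) * (θ:ℝ)^N) * ((1:ℝ)/θ)^k * (θ:ℝ)^⌊α k⌋₊
      = (b:ℝ) * (((θ:ℝ)^⌊α k⌋₊ * (θ:ℝ)^N) / (θ:ℝ)^k) := by
    rw [one_div, inv_pow]; field_simp
  rw [this]
  have hb : (u k : ℝ) ≤ (b:ℝ) := by exact_mod_cast hu k
  have h4 : (1:ℝ) ≤ ((θ:ℝ)^⌊α k⌋₊ * (θ:ℝ)^N) / (θ:ℝ)^k := by
    rw [one_le_div h3]; linarith
  nlinarith [hu k, (Nat.cast_nonneg (u k) : (0:ℝ) ≤ (u k : ℝ))]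

private lemma tail_lt (θ : ℕ) (hθ : 2 ≤ θ) (α : ℕ → ℝ) (hαpos : ∀ k, 0 < α k)
    (N L : ℕ) (hL : 1 ≤ L) (hgap : ∀ k, N ≤ k → α k + L ≤ α (k+1))
    (b : ℕ) (hbL : ((2 * b : ℕ) : ℝ) < (θ:ℝ) ^ L)
    (k0 : ℕ) (hk0 : N ≤ k0) :
    (∑' k : ℕ, if k0 < k then (b:ℝ)/(θ:ℝ)^⌊α k⌋₊ else 0) < 1/(θ:ℝ)^⌊α k0⌋₊ := by
  have hθ2 : (2:ℝ) ≤ (θ:ℝ) := by exact_mod_cast hθ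
  have hθ0 : (0:ℝ) < (θ:ℝ) := by linarith
  set m : ℕ → ℕ := fun k => ⌊α k⌋₊ with hm
  set x : ℝ := ((θ:ℝ)^L)⁻¹ with hx
  have hxpos : 0 < x := by positivity
  have hx2 : x ≤ 1/2 := by
    rw [hx, inv_le_comm₀ (by positivity) (by norm_num)]
    calc ((1:ℝ)/2)⁻¹ = (2:ℝ) := by norm_num
    _ = (θ:ℝ)^1 * (2/θ) := by field_simp
    _ ≤ (θ:ℝ)^L * 1 := by
        apply mul_le_mul (pow_le_pow_right₀ (by linarith) hL) _ (by positivity) (by positivity)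
        rw [div_le_one (by linarith)]; linarith
    _ = (θ:ℝ)^L := mul_one _
  have hx1 : x < 1 := by linarith
  set g : ℕ → ℝ := fun k => if k0 < k then (b:ℝ)/(θ:ℝ)^(m k) else 0 with hg
  have hgnonneg : ∀ k, 0 ≤ g k := by intro k; rw [hg]; dsimp only; split <;> positivity
  have hgs : Summable g := by
    have h1 : Summable (fun k => ((fun _ => b : ℕ → ℕ) k : ℝ)/(θ:ℝ)^⌊α k⌋₊) :=
      summable_aux θ hθ α hαpos N L hL hgap b _ (fun _ => le_rfl)
    apply Summable.of_nonneg_of_le hgnonneg (fun k => ?_) h1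
    rw [hg]; dsimp only; split
    · exact le_rfl
    · positivity
  set B : ℝ := (b:ℝ)/(θ:ℝ)^(m k0) with hB
  have hterm : ∀ j : ℕ, g (j + (k0+1)) ≤ (B * x) * x^j := by
    intro j
    have hkk : k0 < j + (k0+1) := by omega
    have hidx : j + (k0+1) = k0 + (j+1) := by omega
    have hgap2 : m k0 + (j+1) * L ≤ m (k0 + (j+1)) :=
      floor_gap α hαpos N L hgap k0 hk0 (j+1)
    have hpow : (θ:ℝ)^(m k0) * ((θ:ℝ)^L)^(j+1) ≤ (θ:ℝ)^(m (k0 + (j+1))) := by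
      rw [← pow_mul, ← pow_add]
      apply pow_le_pow_right₀ (by linarith)
      simpa [mul_comm] using hgap2
    have heq : (B * x) * x^j = (b:ℝ)/((θ:ℝ)^(m k0) * ((θ:ℝ)^L)^(j+1)) := by
      rw [hB, hx]
      rw [inv_pow, pow_succ]
      field_simp
    rw [hg]; dsimp only; rw [if_pos hkk, hidx, heq]
    apply div_le_div_of_nonneg_left (by positivity) (by positivity) hpow
  have hsum2 : Summable (fun j => g (j + (k0+1))) := (summable_nat_add_iff (k0+1)).2 hgs
  have hgeo : Summable (fun j : ℕ => (B * x) * x^j) :=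
    (summable_geometric_of_lt_one (le_of_lt hxpos) hx1).mul_left _
  have hsplit : (∑' k, g k) = ∑' j, g (j + (k0+1)) := by
    rw [← Summable.sum_add_tsum_nat_add (k0+1) hgs]
    rw [Finset.sum_eq_zero, zero_add]
    intro i hi
    rw [hg]; dsimp only; rw [if_neg]
    simp only [Finset.mem_range] at hi; omega
  have hle : (∑' k, g k) ≤ (B * x) * (1 - x)⁻¹ := by
    rw [hsplit]
    calc (∑' j, g (j + (k0+1))) ≤ ∑' j : ℕ, (B * x) * x^j := Summable.tsum_le_tsum hterm hsum2 hgeo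
    _ = (B * x) * (1 - x)⁻¹ := by
        rw [tsum_mul_left, tsum_geometric_of_lt_one (le_of_lt hxpos) hx1]
  have hfin : (B * x) * (1 - x)⁻¹ < 1/(θ:ℝ)^(m k0) := by
    have hmk : (0:ℝ) < (θ:ℝ)^(m k0) := by positivity
    have hxθ : x * (θ:ℝ)^L = 1 := inv_mul_cancel₀ (by positivity)
    have hb2 : (b:ℝ) * x < 1/2 := by
      push_cast at hbL
      nlinarith [mul_lt_mul_of_pos_right hbL hxpos]
    have hinv : (1 - x)⁻¹ ≤ 2 := by
      rw [inv_le_comm₀ (by linarith : (0:ℝ) < 1 - x) (by norm_num : (0:ℝ) < 2)]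
      linarith
    have h3 : (b:ℝ) * x * (1 - x)⁻¹ < 1 := by
      have h0 : (0:ℝ) ≤ (b:ℝ) * x := by positivity
      have h4 : (0:ℝ) < (1-x)⁻¹ := by rw [inv_pos]; linarith
      nlinarith
    rw [hB]
    rw [div_mul_eq_mul_div, div_mul_eq_mul_div, div_lt_div_iff₀ hmk hmk]
    nlinarith
  calc (∑' k : ℕ, if k0 < k then (b:ℝ)/(θ:ℝ)^⌊α k⌋₊ else 0) = ∑' k, g k := rfl
  _ < 1/(θ:ℝ)^(m k0) := lt_of_le_of_lt hle hfin
lemma not_countable_nat_bool : ¬ Countable (ℕ → Bool) := by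
  intro h
  have h1 := Cardinal.mk_le_aleph0_iff.2 h
  rw [Cardinal.mk_arrow, Cardinal.mk_bool, Cardinal.mk_nat, Cardinal.lift_aleph0,
    Cardinal.lift_ofNat] at h1
  exact absurd h1 (not_le.2 (Cardinal.cantor Cardinal.aleph0))

private lemma select (θ : ℕ) (hθ : 2 ≤ θ) (α : ℕ → ℝ) (hαpos : ∀ k, 0 < α k)
    (N L : ℕ) (hL : 1 ≤ L) (hgap : ∀ k, N ≤ k → α k + L ≤ α (k+1))
    (a b : ℕ) (hab : a < b) (hbL : ((2 * b : ℕ) : ℝ) < (θ:ℝ) ^ L)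
    (P : Set ℕ) [DecidablePred (· ∈ P)] (hP : P.Infinite)
    (C : Set ℝ) (hC : C.Countable) :
    ∃ ε : ℕ → Bool,
      (∑' k : ℕ, ((if k ∈ P then (if N ≤ k ∧ ε k = true then b else a) else 0 : ℕ) : ℝ)
        / (θ:ℝ)^⌊α k⌋₊) ∉ C := by
  classical
  have hθ0 : (0:ℝ) < (θ:ℝ) := by positivity
  have hθ2 : (2:ℝ) ≤ (θ:ℝ) := by exact_mod_cast hθ
  set m : ℕ → ℕ := fun k => ⌊α k⌋₊ with hm
  set u : (ℕ → Bool) → ℕ → ℕ :=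
    fun ε k => if k ∈ P then (if N ≤ k ∧ ε k = true then b else a) else 0 with hu
  have hub : ∀ ε k, u ε k ≤ b := by
    intro ε k; rw [hu]; dsimp only; split
    · split
      · exact le_rfl
      · exact le_of_lt hab
    · exact Nat.zero_le _
  have hsummable : ∀ ε, Summable (fun k => (u ε k : ℝ)/(θ:ℝ)^(m k)) :=
    fun ε => summable_aux θ hθ α hαpos N L hL hgap b (u ε) (hub ε)
  set f : (ℕ → Bool) → ℝ := fun ε => ∑' k, (u ε k : ℝ)/(θ:ℝ)^(m k) with hf
  by_contra hcon
  push_neg at hcon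
  set D : Set (ℕ → Bool) := {ε | ∀ k, ¬(k ∈ P ∧ N ≤ k) → ε k = false} with hD
  -- injectivity on D
  have hinj : Set.InjOn f D := by
    intro ε hε ε' hε' hff
    simp only [hD, Set.mem_setOf_eq] at hε hε'
    by_contra hne
    have hex : ∃ k, ε k ≠ ε' k := Function.ne_iff.1 hne
    set k0 := Nat.find hex with hk0def
    have hk0 : ε k0 ≠ ε' k0 := Nat.find_spec hex
    have hmin : ∀ k, k < k0 → ε k = ε' k := by
      intro k hk
      have := Nat.find_min hex hk
      simpa using this
    have hmem : k0 ∈ P ∧ N ≤ k0 := by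
      by_contra hmem
      have h1 := hε k0 hmem
      have h2 := hε' k0 hmem
      exact hk0 (h1.trans h2.symm)
    set d : ℕ → ℝ := fun k => (u ε k : ℝ)/(θ:ℝ)^(m k) - (u ε' k : ℝ)/(θ:ℝ)^(m k) with hd
    have hds : Summable d := (hsummable ε).sub (hsummable ε')
    have htsum0 : ∑' k, d k = 0 := by
      rw [hd]
      simp only
      rw [Summable.tsum_sub (hsummable ε) (hsummable ε')]
      rw [hf] at hff
      simp only at hff
      rw [hff, sub_self]
    have hsplit : ∑' k, d k = d k0 + ∑' k, (if k = k0 then 0 else d k) :=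
      Summable.tsum_eq_add_tsum_ite hds k0
    -- summability of the rest
    have hrests : Summable (fun k => if k = k0 then 0 else d k) := by
      have he : Summable (fun k => if k = k0 then d k else 0) :=
        summable_of_ne_finset_zero (s := {k0}) (by intro k hk; simp at hk; simp [hk])
      have : (fun k => if k = k0 then 0 else d k) = fun k => d k - (if k = k0 then d k else 0) := by
        funext k; by_cases h : k = k0 <;> simp [h]
      rw [this]
      exact hds.sub he
    set g : ℕ → ℝ := fun k => if k0 < k then (b:ℝ)/(θ:ℝ)^(m k) else 0 with hg
    have hgs : Summable g := by
      apply Summable.of_nonneg_of_le (fun k => by rw [hg]; dsimp only; split <;> positivity)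
        (fun k => ?_)
        (summable_aux θ hθ α hαpos N L hL hgap b (fun _ => b) (fun _ => le_rfl))
      rw [hg]; dsimp only; split
      · exact le_rfl
      · positivity
    have habs : ∀ k, |if k = k0 then 0 else d k| ≤ g k := by
      intro k
      rcases lt_trichotomy k k0 with h | h | h
      · have : u ε k = u ε' k := by rw [hu]; dsimp only; rw [hmin k h]
        rw [if_neg (Nat.ne_of_lt h), hd]
        dsimp only
        rw [this, sub_self, abs_zero, hg]
        dsimp only; split <;> positivity
      · rw [if_pos h, abs_zero, hg]; dsimp only; split <;> positivity
      · rw [if_neg (Nat.ne_of_gt h), hg]; dsimp only; rw [if_pos h, hd]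
        dsimp only
        rw [abs_sub_comm, ← sub_div, abs_div, abs_of_nonneg (by positivity : (0:ℝ) ≤ (θ:ℝ)^(m k))]
        apply div_le_div_of_nonneg_right ?_ (by positivity)
        rw [abs_le]
        have h1 : (0:ℝ) ≤ (u ε k : ℝ) := by positivity
        have h2 : (0:ℝ) ≤ (u ε' k : ℝ) := by positivity
        have h3 : (u ε k : ℝ) ≤ b := by exact_mod_cast hub ε k
        have h4 : (u ε' k : ℝ) ≤ b := by exact_mod_cast hub ε' k
        constructor <;> linarith
    have htail : ∑' k, g k < 1/(θ:ℝ)^(m k0) :=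
      tail_lt θ hθ α hαpos N L hL hgap b hbL k0 hmem.2
    have habs2 : |∑' k, (if k = k0 then 0 else d k)| ≤ ∑' k, g k := by
      rw [abs_le]
      constructor
      · rw [neg_le]
        rw [← tsum_neg]
        apply Summable.tsum_le_tsum (fun k => ?_) hrests.neg hgs
        have := habs k
        rw [abs_le] at this
        linarith [this.1]
      · apply Summable.tsum_le_tsum (fun k => ?_) hrests hgs
        have := habs k
        rw [abs_le] at this
        linarith [this.2]
    have hdk0 : 1/(θ:ℝ)^(m k0) ≤ |d k0| := by
      have hPk0 := hmem.1
      have hNk0 := hmem.2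
      have hval : (u ε k0 : ℝ) - (u ε' k0 : ℝ) = (b:ℝ) - a ∨
          (u ε k0 : ℝ) - (u ε' k0 : ℝ) = (a:ℝ) - b := by
        rw [hu]; dsimp only
        rw [if_pos hPk0, if_pos hPk0]
        rcases Bool.eq_false_or_eq_true (ε k0) with h | h
        · have h' : ε' k0 = false :=
            Bool.eq_false_iff.mpr (fun ht => hk0 (h.trans ht.symm))
          rw [if_pos ⟨hNk0, h⟩, if_neg (by simp [h'])]
          left; rfl
        · have h' : ε' k0 = true :=
            Bool.ne_false_iff.mp (fun hf => hk0 (h.trans hf.symm))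
          rw [if_neg (by simp [h]), if_pos ⟨hNk0, h'⟩]
          right; rfl
      have hba : (1:ℝ) ≤ (b:ℝ) - a := by
        have : a + 1 ≤ b := hab
        have := (Nat.cast_le (α := ℝ)).2 this
        push_cast at this
        linarith
      rw [hd]; dsimp only
      rw [← sub_div, abs_div, abs_of_nonneg (by positivity : (0:ℝ) ≤ (θ:ℝ)^(m k0))]
      apply div_le_div_of_nonneg_right ?_ (by positivity)
      rcases hval with h | h <;> rw [h]
      · rw [abs_of_nonneg (by linarith)]; linarith
      · rw [abs_of_nonpos (by linarith)]; linarith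
    -- contradiction
    have : d k0 = -∑' k, (if k = k0 then 0 else d k) := by
      rw [htsum0] at hsplit; linarith
    rw [this, abs_neg] at hdk0
    linarith [lt_of_le_of_lt (le_trans hdk0 habs2) htail]
  -- image is in C
  have himg : f '' D ⊆ C := by
    rintro - ⟨ε, -, rfl⟩
    exact hcon ε
  have hDc : D.Countable :=
    Set.countable_of_injective_of_countable_image hinj (hC.mono himg)
  -- D is uncountable
  have hP' : {k | k ∈ P ∧ N ≤ k}.Infinite := by
    have : {k | k ∈ P ∧ N ≤ k} = P \ {k | k < N} := by
      ext k; simp [Set.mem_setOf_eq, Set.mem_diff, not_lt]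
    rw [this]
    exact hP.diff (Set.finite_lt_nat N)
  set ι := hP'.natEmbedding with hι
  set G : (ℕ → Bool) → ℕ → Bool :=
    fun σ k => if h : ∃ n, (ι n : ℕ) = k then σ h.choose else false with hG
  have hG1 : ∀ σ, G σ ∈ D := by
    intro σ k hk
    rw [hG]; dsimp only
    rw [dif_neg]
    rintro ⟨n, hn⟩
    exact hk (hn ▸ (ι n).2)
  have hG2 : Function.Injective G := by
    intro σ σ' hσ
    funext n
    have h1 : G σ (ι n : ℕ) = σ n := by
      rw [hG]; dsimp only
      have hex : ∃ n', ((ι n' : ↥{k | k ∈ P ∧ N ≤ k}) : ℕ) = (ι n : ℕ) := ⟨n, rfl⟩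
      rw [dif_pos hex]
      congr 1
      exact ι.injective (Subtype.ext hex.choose_spec)
    have h2 : G σ' (ι n : ℕ) = σ' n := by
      rw [hG]; dsimp only
      have hex : ∃ n', ((ι n' : ↥{k | k ∈ P ∧ N ≤ k}) : ℕ) = (ι n : ℕ) := ⟨n, rfl⟩
      rw [dif_pos hex]
      congr 1
      exact ι.injective (Subtype.ext hex.choose_spec)
    rw [← h1, ← h2, hσ]
  have : Countable (ℕ → Bool) := by
    haveI := hDc.to_subtype
    exact Function.Injective.countable
      (f := fun σ => (⟨G σ, hG1 σ⟩ : ↥D)) (fun σ σ' h => hG2 (congrArg Subtype.val h))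
  exact not_countable_nat_bool this

/-- Given `θ ≥ 2`, a sequence `α` of positive reals with `α (k+1) > c * α k` for some `c > 1`,
a finite set `J` of positive integers with at least two elements, a finite set `F` of reals,
and a map `φ : ℕ → {0, …, e}` with infinite fibers, there exist sequences
`(u_k^i)` supported (with values in `J`) exactly on the fiber `φ⁻¹{i}` such that the numbers
`Σ_k u_k^i / θ^⌊α_k⌋` form a family that is algebraically independent over `ℚ(F)`. -/
theorem exists_algebraicIndependent_series (e θ : ℕ) (hθ : 2 ≤ θ)
    (α : ℕ → ℝ) (hαpos : ∀ k, 0 < α k)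
    (c : ℝ) (hc : 1 < c) (hα : ∀ k, c * α k < α (k + 1))
    (J : Finset ℕ) (hJpos : ∀ j ∈ J, 0 < j) (hJcard : 2 ≤ J.card)
    (F : Finset ℝ)
    (φ : ℕ → Fin (e + 1)) (hφ : ∀ i, {k : ℕ | φ k = i}.Infinite) :
    ∃ u : Fin (e + 1) → ℕ → ℕ,
      (∀ i k, if φ k = i then u i k ∈ J else u i k = 0) ∧
      AlgebraicIndependent (↥(IntermediateField.adjoin ℚ (F : Set ℝ)))
        (fun i : Fin (e + 1) => ∑' k : ℕ, (u i k : ℝ) / (θ : ℝ) ^ ⌊α k⌋₊) := by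
  classical
  -- two elements of J
  obtain ⟨a, b, ha, hb, hab⟩ : ∃ a b, a ∈ J ∧ b ∈ J ∧ a < b := by
    obtain ⟨a, ha, b, hb, hab0⟩ := Finset.one_lt_card.1 (by omega : 1 < J.card)
    rcases hab0.lt_or_gt with h | h
    · exact ⟨a, b, ha, hb, h⟩
    · exact ⟨b, a, hb, ha, h⟩
  set L : ℕ := 2 * b + 2 with hLdef
  have hL : 1 ≤ L := by omega
  have hbL : ((2 * b : ℕ) : ℝ) < (θ:ℝ) ^ L := by
    have h1 : (2 * b : ℕ) < 2 ^ L := by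
      calc 2 * b < 2 ^ (2 * b) := Nat.lt_two_pow_self
      _ ≤ 2 ^ L := Nat.pow_le_pow_right (by norm_num) (by omega)
    have h2 : ((2:ℝ)) ^ L ≤ (θ:ℝ) ^ L :=
      pow_le_pow_left₀ (by norm_num) (by exact_mod_cast hθ) L
    calc ((2 * b : ℕ) : ℝ) < (2:ℝ) ^ L := by exact_mod_cast h1
    _ ≤ (θ:ℝ) ^ L := h2
  obtain ⟨N, hgap⟩ := exists_gap α hαpos c hc hα L
  set K := IntermediateField.adjoin ℚ (F : Set ℝ) with hK
  haveI hKc : Countable ↥K := by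
    rw [← Cardinal.mk_le_aleph0_iff]
    refine le_trans (IntermediateField.cardinalMk_adjoin_le ℚ (F : Set ℝ)) ?_
    have h1 : #ℚ ≤ Cardinal.aleph0 := Cardinal.mk_le_aleph0
    have h2 : #(↥(F : Set ℝ)) ≤ Cardinal.aleph0 := by
      haveI := F.finite_toSet.countable.to_subtype
      exact Cardinal.mk_le_aleph0
    exact sup_le (sup_le h1 h2) le_rfl
  -- the main induction
  have main : ∀ n, ∀ hn : n ≤ e + 1, ∃ w : Fin n → ℕ → ℕ,
      (∀ (i : Fin n) (k : ℕ), if φ k = Fin.castLE hn i then w i k ∈ J else w i k = 0) ∧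
      AlgebraicIndependent ↥K
        (fun i : Fin n => ∑' k : ℕ, (w i k : ℝ) / (θ : ℝ) ^ ⌊α k⌋₊) := by
    intro n
    induction n with
    | zero =>
      intro hn
      refine ⟨fun i => i.elim0, fun i => i.elim0, ?_⟩
      exact algebraicIndependent_empty_type_iff.2 (algebraMap (↥K) ℝ).injective
    | succ n ih =>
      intro hn
      have hn' : n ≤ e + 1 := Nat.le_of_succ_le hn
      obtain ⟨w, hw, halg⟩ := ih hn'
      set x : Fin n → ℝ := fun i => ∑' k : ℕ, (w i k : ℝ) / (θ : ℝ) ^ ⌊α k⌋₊ with hx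
      set i₀ : Fin (e + 1) := Fin.castLE hn (Fin.last n) with hi₀
      haveI hcnt : Countable ↥(Algebra.adjoin ↥K (Set.range x)) := by
        rw [← Cardinal.mk_le_aleph0_iff]
        refine le_trans (Algebra.cardinalMk_adjoin_le ↥K (Set.range x)) ?_
        have h1 : #(↥K) ≤ Cardinal.aleph0 := Cardinal.mk_le_aleph0
        have h2 : #(↥(Set.range x)) ≤ Cardinal.aleph0 := by
          haveI := (Set.finite_range x).countable.to_subtype
          exact Cardinal.mk_le_aleph0
        exact sup_le (sup_le h1 h2) le_rfl
      haveI : Module.IsTorsionFree ↥(Algebra.adjoin ↥K (Set.range x)) ℝ :=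
        inferInstance
      have hC : {y : ℝ | IsAlgebraic ↥(Algebra.adjoin ↥K (Set.range x)) y}.Countable :=
        Algebraic.countable _ ℝ
      obtain ⟨ε, hεnot⟩ := select θ hθ α hαpos N L hL hgap a b hab hbL
        {k | φ k = i₀} (hφ i₀) _ hC
      set unew : ℕ → ℕ :=
        fun k => if k ∈ {k | φ k = i₀} then (if N ≤ k ∧ ε k = true then b else a) else 0
        with hunew
      set Snew : ℝ := ∑' k : ℕ, (unew k : ℝ) / (θ:ℝ) ^ ⌊α k⌋₊ with hSnew
      have htr : Transcendental ↥(Algebra.adjoin ↥K (Set.range x)) Snew := hεnot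
      have halg2 := (halg.option_iff_transcendental Snew).2 htr
      have halg3 := halg2.comp (⇑finSuccEquivLast) finSuccEquivLast.injective
      refine ⟨Fin.snoc w unew, ?_, ?_⟩
      · intro i k
        refine Fin.lastCases ?_ (fun j => ?_) i
        · rw [Fin.snoc_last]
          have : Fin.castLE hn (Fin.last n) = i₀ := rfl
          rw [this, hunew]
          dsimp only
          by_cases h : φ k = i₀
          · rw [if_pos h, if_pos (show k ∈ {k | φ k = i₀} from h)]
            split
            · exact hb
            · exact ha
          · rw [if_neg h, if_neg (show k ∉ {k | φ k = i₀} from h)]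
        · rw [Fin.snoc_castSucc]
          have hcast : Fin.castLE hn (Fin.castSucc j) = Fin.castLE hn' j := rfl
          rw [hcast]
          exact hw j k
      · have heq : (fun i : Fin (n+1) => ∑' k : ℕ, ((Fin.snoc w unew : Fin (n+1) → ℕ → ℕ) i k : ℝ)
            / (θ : ℝ) ^ ⌊α k⌋₊)
            = (fun o : Option (Fin n) => o.elim Snew x) ∘ ⇑finSuccEquivLast := by
          funext i
          refine Fin.lastCases ?_ (fun j => ?_) i
          · simp only [Function.comp_apply, finSuccEquivLast_last, Option.elim, Fin.snoc_last]; rfl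
          · simp only [Function.comp_apply, finSuccEquivLast_castSucc, Option.elim,
              Fin.snoc_castSucc]; rfl
        rw [heq]
        exact halg3
  obtain ⟨w, hw, halg⟩ := main (e + 1) le_rfl
  refine ⟨w, fun i k => ?_, halg⟩
  have : Fin.castLE (le_refl (e+1)) i = i := rfl
  have h2 := hw i k
  rwa [this] at h2
end

section
/- Let n ≥ 2 and d ∈ [1, ⌊n/2⌋]. Let R₁,…,R_d be rational subspaces of ℝ^n whose sum is direct, and for each j ∈ {1,…,d} let A_j ⊆ R_j be a 1-dimensional subspace. Set A = ⊕_{j=1}^d A_j, and for J ⊆ {1,…,d} set A_J = ⊕_{j∈J} A_j and g(A_J, e) = max(0, #J + e − n). Let e ∈ [1, n−1] and k ∈ [1, min(d,e) − g(A,e)]. Then A is (e,k)-irrational if and only if for every J ⊆ {1,…,d} with #J = k + g(A,e), the subspace A_J is (e, k + g(A,e) − g(A_J,e))-irrational. -/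
noncomputable section

set_option linter.unusedSectionVars false
set_option maxHeartbeats 1000000

open Submodule Module

namespace IrratProofAux

def iQ {n : ℕ} (q : Fin n → ℚ) : EuclideanSpace ℝ (Fin n) := WithLp.toLp 2 (fun i => (q i : ℝ))

variable {n : ℕ}


lemma iQ_add (q p : Fin n → ℚ) : iQ (q + p) = iQ q + iQ p := by
  ext i
  simp [iQ, PiLp.add_apply]

lemma iQ_smul (c : ℚ) (q : Fin n → ℚ) : iQ (c • q) = (c : ℝ) • iQ q := by
  ext i
  simp [iQ, PiLp.smul_apply]

lemma iQ_zero : iQ (0 : Fin n → ℚ) = 0 := by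
  ext i; simp [iQ]

lemma iQ_inj : Function.Injective (iQ (n := n)) := by
  intro q p h
  funext i
  have : (q i : ℝ) = (p i : ℝ) := by simpa [iQ] using congrArg (fun v : EuclideanSpace ℝ (Fin n) => v i) h
  exact_mod_cast this

lemma iQ_sum {ι : Type*} (s : Finset ι) (g : ι → (Fin n → ℚ)) :
    iQ (∑ i ∈ s, g i) = ∑ i ∈ s, iQ (g i) := by
  classical
  induction s using Finset.induction_on with
  | empty => simp [iQ_zero]
  | insert _ _ h ih => simp [Finset.sum_insert h, iQ_add, ih]

lemma isRat_iff (B : Submodule ℝ (EuclideanSpace ℝ (Fin n))) :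
    IsRationalSubspace B ↔ ∃ σ : Set (Fin n → ℚ), Submodule.span ℝ (iQ '' σ) = B := by
  constructor
  · rintro ⟨s, hs, rfl⟩
    refine ⟨{q | iQ q ∈ s}, ?_⟩
    congr 1
    apply Set.Subset.antisymm
    · rintro v ⟨q, hq, rfl⟩; exact hq
    · intro v hv
      have : ∀ i, ∃ q : ℚ, v i = (q : ℝ) := hs v hv
      choose q hq using this
      have hv' : v = iQ q := by ext i; exact hq i
      exact ⟨q, by simp only [Set.mem_setOf_eq, ← hv']; exact hv, hv'.symm⟩
  · rintro ⟨σ, rfl⟩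
    exact ⟨iQ '' σ, by rintro v ⟨q, _, rfl⟩ i; exact ⟨q i, rfl⟩, rfl⟩

section helpers
variable {K : Type*} [Field K] {M : Type*} [AddCommGroup M] [Module K M]
variable {ι : Type*} [Fintype ι] [DecidableEq ι]

lemma mem_biSup_iff (t : ι → Submodule K M) (S : Finset ι) (x : M) :
    (x ∈ ⨆ j ∈ S, t j) ↔ ∃ a : ι → M, (∀ j, a j ∈ t j) ∧ x = ∑ j ∈ S, a j := by
  classical
  constructor
  · intro hx
    induction S using Finset.induction_on generalizing x with
    | empty =>
      simp only [Finset.notMem_empty, iSup_false, iSup_bot, mem_bot] at hx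
      exact ⟨fun _ => 0, fun j => zero_mem _, by simp [hx]⟩
    | @insert i S hi ih =>
      rw [Finset.iSup_insert] at hx
      obtain ⟨y, hy, z, hz, rfl⟩ := Submodule.mem_sup.mp hx
      obtain ⟨a, ha, rfl⟩ := ih z hz
      refine ⟨Function.update a i y, ?_, ?_⟩
      · intro j
        by_cases hj : j = i
        · subst hj; simpa using hy
        · simpa [Function.update_of_ne hj] using ha j
      · rw [Finset.sum_insert hi, Function.update_self]
        congr 1
        refine Finset.sum_congr rfl fun j hj => ?_
        have hji : j ≠ i := fun h => hi (h ▸ hj)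
        rw [Function.update_of_ne hji]
  · rintro ⟨a, ha, rfl⟩
    exact Submodule.sum_mem _ fun j hj =>
      Submodule.mem_iSup_of_mem j (by exact le_iSup (fun _ => t j) hj (ha j))

lemma sum_eq_zero_of_indep {t : ι → Submodule K M} (h : iSupIndep t)
    (a : ι → M) (ha : ∀ j, a j ∈ t j) (S : Finset ι)
    (hsum : ∑ j ∈ S, a j = 0) : ∀ j ∈ S, a j = 0 := by
  classical
  intro i hi
  have h1 : a i = -∑ j ∈ S.erase i, a j := by
    have h0 := Finset.add_sum_erase S a hi
    rw [hsum] at h0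
    exact eq_neg_of_add_eq_zero_left h0
  have h2 : (∑ j ∈ S.erase i, a j) ∈ ⨆ (j : ι) (_ : j ≠ i), t j := by
    refine Submodule.sum_mem _ fun j hj => ?_
    have hji : j ≠ i := Finset.ne_of_mem_erase hj
    exact Submodule.mem_iSup_of_mem j (by exact le_iSup (fun _ => t j) hji (ha j))
  have h3 : a i ∈ (⨆ (j : ι) (_ : j ≠ i), t j) := by
    rw [h1]; exact neg_mem h2
  have := (iSupIndep_def.mp h i)
  have h4 : a i ∈ t i ⊓ (⨆ (j : ι) (_ : j ≠ i), t j) := ⟨ha i, h3⟩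
  rw [this.eq_bot] at h4
  simpa using h4

end helpers

section helpers2
variable {K : Type*} [Field K] {M : Type*} [AddCommGroup M] [Module K M]
variable {ι : Type*} [Fintype ι] [DecidableEq ι]

lemma finrank_biSup [FiniteDimensional K M] (t : ι → Submodule K M) (h : iSupIndep t)
    (S : Finset ι) :
    finrank K ↥(⨆ j ∈ S, t j) = ∑ j ∈ S, finrank K (t j) := by
  classical
  induction S using Finset.induction_on with
  | empty => simp
  | @insert i S hi ih =>
    rw [Finset.iSup_insert, Finset.sum_insert hi, ← ih]
    have hd : Disjoint (t i) (⨆ j ∈ S, t j) := by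
      have := h.disjoint_biSup (x := i) (y := (↑S : Set ι)) (by simpa using hi)
      simpa using this
    have h2 := Submodule.finrank_sup_add_finrank_inf_eq (t i) (⨆ j ∈ S, t j)
    rw [hd.eq_bot, finrank_bot, add_zero] at h2
    exact h2

lemma iSup_finset_univ (t : ι → Submodule K M) :
    (⨆ j ∈ (Finset.univ : Finset ι), t j) = ⨆ j, t j := by simp

lemma selection [FiniteDimensional K M] (t : ι → Submodule K M) (h : iSupIndep t)
    (h1 : ∀ j, finrank K (t j) = 1) (W : Submodule K M) (hW : W ≤ ⨆ j, t j) :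
    ∃ J : Finset ι, J.card = finrank K W ∧ Disjoint W (⨆ j ∈ Jᶜ, t j) := by
  classical
  set w := finrank K W with hw
  have hcard : ∀ S : Finset ι, finrank K ↥(⨆ j ∈ S, t j) = S.card := by
    intro S
    rw [finrank_biSup t h S]
    simp [h1]
  have htop : finrank K ↥(⨆ j, t j) = Fintype.card ι := by
    rw [← iSup_finset_univ t, hcard]
    simp
  have hwle : ∀ J : Finset ι, Disjoint W (⨆ j ∈ Jᶜ, t j) → w ≤ J.card := by
    intro J hdis
    have h2 := Submodule.finrank_sup_add_finrank_inf_eq W (⨆ j ∈ Jᶜ, t j)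
    rw [hdis.eq_bot, finrank_bot, add_zero, hcard] at h2
    have h3 : W ⊔ (⨆ j ∈ Jᶜ, t j) ≤ ⨆ j, t j := by
      refine sup_le hW ?_
      refine iSup₂_le fun j _ => le_iSup t j
    have h4 := Submodule.finrank_mono h3
    rw [h2, htop] at h4
    have h5 : Jᶜ.card = Fintype.card ι - J.card := by
      simp [Finset.card_compl]
    have h6 : J.card ≤ Fintype.card ι := Finset.card_le_univ J
    omega
  have aux : ∀ N (J : Finset ι), J.card ≤ N → Disjoint W (⨆ j ∈ Jᶜ, t j) →
      ∃ J' : Finset ι, J'.card = w ∧ Disjoint W (⨆ j ∈ J'ᶜ, t j) := by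
    intro N
    induction N with
    | zero =>
      intro J hJ hdis
      have := hwle J hdis
      exact ⟨J, by omega, hdis⟩
    | succ N ihN =>
      intro J hJ hdis
      have hwJ := hwle J hdis
      by_cases hJw : J.card = w
      · exact ⟨J, hJw, hdis⟩
      · -- J.card > w
        have hJw' : w < J.card := lt_of_le_of_ne hwJ (fun hh => hJw hh.symm)
        set X := (⨆ j ∈ Jᶜ, t j) with hX
        set X' := W ⊔ X with hX'
        have hfX' : finrank K ↥X' = w + Jᶜ.card := by
          have h2 := Submodule.finrank_sup_add_finrank_inf_eq W X
          rw [hdis.eq_bot, finrank_bot, add_zero, hcard] at h2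
          exact h2
        have hX'lt : finrank K ↥X' < Fintype.card ι := by
          have h5 : Jᶜ.card = Fintype.card ι - J.card := by simp [Finset.card_compl]
          have h6 : J.card ≤ Fintype.card ι := Finset.card_le_univ J
          omega
        have hexj : ∃ j, ¬ t j ≤ X' := by
          by_contra hcon
          push_neg at hcon
          have : (⨆ j, t j) ≤ X' := iSup_le hcon
          have := Submodule.finrank_mono this
          rw [htop] at this
          omega
        obtain ⟨j, hj⟩ := hexj
        have hjJ : j ∈ J := by
          by_contra hjJ
          exact hj (le_trans (le_iSup₂ (f := fun j _ => t j) j (Finset.mem_compl.mpr hjJ))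
            le_sup_right)
        refine ihN (J.erase j) ?_ ?_
        · have := Finset.card_erase_of_mem hjJ
          omega
        · rw [Finset.compl_erase, Finset.iSup_insert]
          rw [disjoint_def]
          intro x hxW hx
          obtain ⟨y, hy, z, hz, rfl⟩ := Submodule.mem_sup.mp hx
          by_cases hy0 : y = 0
          · subst hy0
            rw [zero_add]
            exact (disjoint_def.mp hdis) z (by simpa using hxW) hz
          · exfalso
            apply hj
            have hsy : span K {y} ≤ X' := by
              rw [span_le, Set.singleton_subset_iff]
              have : y = (y + z) - z := by abel
              rw [this]
              exact X'.sub_mem (le_sup_left (a := W) (b := X) hxW)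
                (le_sup_right (a := W) (b := X) hz)
            have heq : span K {y} = t j := by
              apply Submodule.eq_of_le_of_finrank_eq
              · rwa [span_le, Set.singleton_subset_iff]
              · rw [finrank_span_singleton hy0, h1 j]
            rwa [← heq]
  refine aux (Fintype.card ι) Finset.univ (by simp) ?_
  simp only [Finset.compl_univ]
  simp [disjoint_bot_right]
end helpers2

lemma span_iQ_top : span ℝ (Set.range (iQ (n := n))) = ⊤ := by
  have hb := (EuclideanSpace.basisFun (Fin n) ℝ).toBasis.span_eq
  rw [← top_le_iff, ← hb]
  apply span_le.mpr
  rintro v ⟨i, rfl⟩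
  apply subset_span
  refine ⟨Pi.single i 1, ?_⟩
  rw [OrthonormalBasis.coe_toBasis, EuclideanSpace.basisFun_apply]
  ext j
  simp [iQ, EuclideanSpace.single_apply, Pi.single_apply]
  split <;> simp

lemma rat_extend : ∀ (g : ℕ) (C : Submodule ℝ (EuclideanSpace ℝ (Fin n))) (e : ℕ),
    IsRationalSubspace C → finrank ℝ C + g = e → e ≤ n →
    ∃ B, IsRationalSubspace B ∧ C ≤ B ∧ finrank ℝ B = e := by
  intro g
  induction g with
  | zero =>
    intro C e hC he _
    exact ⟨C, hC, le_rfl, by omega⟩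
  | succ g ih =>
    intro C e hC he hen
    have hlt : finrank ℝ C < n := by omega
    have hne : C ≠ ⊤ := by
      intro h
      rw [h, finrank_top, finrank_euclideanSpace_fin] at hlt
      omega
    have hexq : ∃ q : Fin n → ℚ, iQ q ∉ C := by
      by_contra hcon
      push_neg at hcon
      have hle : span ℝ (Set.range (iQ (n := n))) ≤ C :=
        span_le.mpr (by rintro v ⟨q, rfl⟩; exact hcon q)
      rw [span_iQ_top] at hle
      exact hne (top_le_iff.mp hle)
    obtain ⟨q, hq⟩ := hexq
    obtain ⟨σ, hσ⟩ := (isRat_iff C).mp hC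
    have hC' : IsRationalSubspace (C ⊔ span ℝ {iQ q}) := by
      rw [isRat_iff]
      refine ⟨σ ∪ {q}, ?_⟩
      rw [Set.image_union, span_union, hσ]
      simp
    have hq0 : iQ q ≠ 0 := fun h => hq (h ▸ C.zero_mem)
    have hdis : Disjoint C (span ℝ {iQ q}) :=
      (Submodule.disjoint_span_singleton' hq0).mpr hq
    have hrank : finrank ℝ ↥(C ⊔ span ℝ {iQ q}) = finrank ℝ C + 1 := by
      have h2 := Submodule.finrank_sup_add_finrank_inf_eq C (span ℝ {iQ q})
      rw [hdis.eq_bot, finrank_bot, add_zero, finrank_span_singleton hq0] at h2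
      exact h2
    obtain ⟨B, hB1, hB2, hB3⟩ := ih (C ⊔ span ℝ {iQ q}) e hC' (by omega) hen
    exact ⟨B, hB1, le_trans le_sup_left hB2, hB3⟩

lemma exists_proj (d : ℕ) (R : Fin d → Submodule ℝ (EuclideanSpace ℝ (Fin n)))
    (hrat : ∀ j, IsRationalSubspace (R j)) (hind : iSupIndep R) (J : Finset (Fin d)) :
    ∃ f : EuclideanSpace ℝ (Fin n) →ₗ[ℝ] EuclideanSpace ℝ (Fin n),
      (∀ j ∈ J, ∀ v ∈ R j, f v = v) ∧ (∀ j ∉ J, ∀ v ∈ R j, f v = 0) ∧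
      (∀ B, IsRationalSubspace B → IsRationalSubspace (Submodule.map f B)) := by
  classical
  -- rational generators
  have hσ : ∀ j, ∃ σ : Set (Fin n → ℚ), Submodule.span ℝ (iQ '' σ) = R j :=
    fun j => (isRat_iff (R j)).mp (hrat j)
  choose σ hσ using hσ
  -- rational-side submodules
  set R₀ : Fin d → Submodule ℚ (Fin n → ℚ) := fun j => span ℚ (σ j) with hR₀
  have hmem : ∀ j, ∀ x ∈ R₀ j, iQ x ∈ R j := by
    intro j x hx
    induction hx using Submodule.span_induction with
    | mem y hy => exact (hσ j) ▸ subset_span ⟨y, hy, rfl⟩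
    | zero => rw [iQ_zero]; exact (R j).zero_mem
    | add y z _ _ hy hz => rw [iQ_add]; exact (R j).add_mem hy hz
    | smul c y _ hy => rw [iQ_smul]; exact (R j).smul_mem _ hy
  have hmem_biSup : ∀ (S : Finset (Fin d)) (x : Fin n → ℚ), x ∈ (⨆ j ∈ S, R₀ j) →
      iQ x ∈ (⨆ j ∈ S, R j) := by
    intro S x hx
    obtain ⟨a, ha, rfl⟩ := (mem_biSup_iff R₀ S x).mp hx
    rw [iQ_sum]
    exact (mem_biSup_iff R S (∑ j ∈ S, iQ (a j))).mpr
      ⟨fun j => iQ (a j), fun j => hmem j _ (ha j), rfl⟩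
  have hind₀ : iSupIndep R₀ := by
    rw [iSupIndep_def]
    intro i
    rw [disjoint_def]
    intro x hxi hxrest
    have h1 : (⨆ (j : Fin d) (_ : j ≠ i), R₀ j) = ⨆ j ∈ ({i}ᶜ : Finset (Fin d)), R₀ j := by
      simp only [Finset.mem_compl, Finset.mem_singleton]
    rw [h1] at hxrest
    have h2 : iQ x ∈ R i := hmem i x hxi
    have h3 : iQ x ∈ ⨆ j ∈ ({i}ᶜ : Finset (Fin d)), R j := hmem_biSup _ x hxrest
    have h4 : (⨆ j ∈ ({i}ᶜ : Finset (Fin d)), R j) = ⨆ (j : Fin d) (_ : j ≠ i), R j := by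
      simp only [Finset.mem_compl, Finset.mem_singleton]
    rw [h4] at h3
    have h5 := (iSupIndep_def.mp hind i).eq_bot
    have h6 : iQ x ∈ (⊥ : Submodule ℝ (EuclideanSpace ℝ (Fin n))) := h5 ▸ ⟨h2, h3⟩
    rw [mem_bot] at h6
    apply iQ_inj
    rw [h6, iQ_zero]
  set S : Submodule ℚ (Fin n → ℚ) := ⨆ j ∈ J, R₀ j with hS
  set U : Submodule ℚ (Fin n → ℚ) := ⨆ j ∈ Jᶜ, R₀ j with hU
  have hdisjSU : Disjoint S U := by
    rw [disjoint_def]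
    intro x hxS hxU
    obtain ⟨a, ha, hax⟩ := (mem_biSup_iff R₀ J x).mp hxS
    obtain ⟨b, hb, hbx⟩ := (mem_biSup_iff R₀ Jᶜ x).mp hxU
    set c : Fin d → (Fin n → ℚ) := fun j => if j ∈ J then a j else -(b j) with hc
    have hcmem : ∀ j, c j ∈ R₀ j := by
      intro j
      by_cases hj : j ∈ J <;> simp [hc, hj, ha j, neg_mem (hb j)]
    have hsum : ∑ j, c j = 0 := by
      rw [← Finset.sum_add_sum_compl J c]
      have e1 : ∑ j ∈ J, c j = ∑ j ∈ J, a j :=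
        Finset.sum_congr rfl fun j hj => by simp [hc, hj]
      have e2 : ∑ j ∈ Jᶜ, c j = -∑ j ∈ Jᶜ, b j := by
        rw [← Finset.sum_neg_distrib]
        exact Finset.sum_congr rfl fun j hj => by simp [hc, Finset.mem_compl.mp hj]
      rw [e1, e2, ← hax, ← hbx]
      abel
    have hz := sum_eq_zero_of_indep hind₀ c hcmem Finset.univ (by simpa using hsum)
    have : ∀ j ∈ J, a j = 0 := by
      intro j hj
      have := hz j (Finset.mem_univ j)
      simpa [hc, hj] using this
    rw [hax]
    exact Finset.sum_eq_zero this
  obtain ⟨C', hC'⟩ := Submodule.exists_isCompl (S ⊔ U)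
  set T : Submodule ℚ (Fin n → ℚ) := U ⊔ C' with hT
  have hST : IsCompl S T := by
    constructor
    · rw [disjoint_def]
      intro x hxS hxT
      obtain ⟨u, hu, c, hc, rfl⟩ := Submodule.mem_sup.mp hxT
      have hcm : c ∈ S ⊔ U := by
        have : c = (u + c) - u := by abel
        rw [this]
        exact Submodule.sub_mem _ (le_sup_left (a := S) (b := U) hxS)
          (le_sup_right (a := S) (b := U) hu)
      have hc0 : c = 0 := by
        have := (disjoint_def.mp hC'.disjoint) c hcm hc
        exact this
      subst hc0
      rw [add_zero] at hxS ⊢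
      exact (disjoint_def.mp hdisjSU) u hxS hu
    · rw [codisjoint_iff, ← sup_assoc]
      exact hC'.codisjoint.eq_top
  set f₀ : (Fin n → ℚ) →ₗ[ℚ] (Fin n → ℚ) :=
    S.subtype.comp (S.linearProjOfIsCompl T hST) with hf₀
  have hf₀_id : ∀ x ∈ S, f₀ x = x := by
    intro x hx
    have := Submodule.linearProjOfIsCompl_apply_left hST ⟨x, hx⟩
    simp only [hf₀, LinearMap.comp_apply, Submodule.coe_subtype]
    exact congrArg Subtype.val this
  have hf₀_0 : ∀ x ∈ T, f₀ x = 0 := by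
    intro x hx
    have := Submodule.linearProjOfIsCompl_apply_right' hST hx
    simp only [hf₀, LinearMap.comp_apply, Submodule.coe_subtype, this]
    exact congrArg Subtype.val this
  -- the real-side linear map
  set f : EuclideanSpace ℝ (Fin n) →ₗ[ℝ] EuclideanSpace ℝ (Fin n) :=
    { toFun := fun v => ∑ j : Fin n, v j • iQ (f₀ (Pi.single j 1))
      map_add' := by
        intro u v
        simp only [PiLp.add_apply, add_smul, Finset.sum_add_distrib]
      map_smul' := by
        intro c v
        simp only [PiLp.smul_apply, RingHom.id_apply, smul_eq_mul, mul_smul, Finset.smul_sum] }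
    with hf
  have hfapp : ∀ v : EuclideanSpace ℝ (Fin n),
      f v = ∑ j : Fin n, v j • iQ (f₀ (Pi.single j 1)) := fun v => rfl
  have hfq : ∀ q : Fin n → ℚ, f (iQ q) = iQ (f₀ q) := by
    intro q
    have h2 : q = ∑ j : Fin n, q j • (Pi.single j 1 : Fin n → ℚ) := by
      funext i
      rw [Finset.sum_apply]
      simp [Pi.single_apply]
    calc f (iQ q) = ∑ j : Fin n, (q j : ℝ) • iQ (f₀ (Pi.single j 1)) := by
          rw [hfapp]; rfl
      _ = ∑ j : Fin n, iQ (q j • f₀ (Pi.single j 1)) := by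
          refine Finset.sum_congr rfl fun j _ => (iQ_smul _ _).symm
      _ = iQ (∑ j : Fin n, q j • f₀ (Pi.single j 1)) := (iQ_sum _ _).symm
      _ = iQ (f₀ (∑ j : Fin n, q j • (Pi.single j 1 : Fin n → ℚ))) := by
          rw [map_sum]
          refine congrArg iQ (Finset.sum_congr rfl fun j _ => ?_).symm
          rw [map_smul]
      _ = iQ (f₀ q) := by rw [← h2]
  refine ⟨f, ?_, ?_, ?_⟩
  · intro j hj v hv
    have hle : R j ≤ LinearMap.eqLocus f LinearMap.id := by
      rw [← hσ j, span_le]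
      rintro w ⟨x, hx, rfl⟩
      have hxS : x ∈ S := by
        have : R₀ j ≤ S := le_iSup₂ (f := fun j _ => R₀ j) j hj
        exact this (subset_span hx)
      have : f (iQ x) = iQ x := by rw [hfq, hf₀_id x hxS]
      exact LinearMap.mem_eqLocus.mpr this
    exact LinearMap.mem_eqLocus.mp (hle hv)
  · intro j hj v hv
    have hle : R j ≤ LinearMap.ker f := by
      rw [← hσ j, span_le]
      rintro w ⟨x, hx, rfl⟩
      have hxT : x ∈ T := by
        have h1 : R₀ j ≤ U := le_iSup₂ (f := fun j _ => R₀ j) j (Finset.mem_compl.mpr hj)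
        exact le_sup_left (a := U) (b := C') (h1 (subset_span hx))
      have : f (iQ x) = 0 := by rw [hfq, hf₀_0 x hxT, iQ_zero]
      simpa [LinearMap.mem_ker] using this
    exact LinearMap.mem_ker.mp (hle hv)
  · intro B hB
    obtain ⟨σB, hσB⟩ := (isRat_iff B).mp hB
    rw [isRat_iff]
    refine ⟨f₀ '' σB, ?_⟩
    rw [← hσB, Submodule.map_span]
    congr 1
    rw [Set.image_image, Set.image_image]
    exact Set.image_congr fun x _ => (hfq x).symm

end IrratProofAux


open IrratProofAux in
/-- Let `R₁, …, R_d` be rational subspaces of `ℝ^n` in direct sum, and `A_j ⊆ R_j` lines.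
Set `A = ⊕_j A_j` and `A_J = ⊕_{j ∈ J} A_j`. For `e ∈ [1, n-1]` and
`k ∈ [1, min d e - max 0 (d + e - n)]`, the subspace `A` is `(e,k)`-irrational iff for every
`J` of cardinality `k + max 0 (d + e - n)` the space `A_J` is
`(e, k + max 0 (d+e-n) - max 0 (#J+e-n))`-irrational. -/
theorem irrational_direct_sum_iff (n d : ℕ) (hn : 2 ≤ n) (hd1 : 1 ≤ d) (hd2 : d ≤ n / 2)
    (R : Fin d → Submodule ℝ (EuclideanSpace ℝ (Fin n)))
    (hRrat : ∀ j, IsRationalSubspace (R j))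
    (hRind : iSupIndep R)
    (A : Fin d → Submodule ℝ (EuclideanSpace ℝ (Fin n)))
    (hAR : ∀ j, A j ≤ R j) (hA1 : ∀ j, Module.finrank ℝ (A j) = 1)
    (e k : ℕ) (he1 : 1 ≤ e) (he2 : e ≤ n - 1)
    (hk1 : 1 ≤ k) (hk2 : k ≤ min d e - (d + e - n)) :
    IsIrrational (⨆ j, A j) e k ↔
      ∀ J : Finset (Fin d), J.card = k + (d + e - n) →
        IsIrrational (⨆ j ∈ J, A j) e (k + (d + e - n) - (J.card + e - n)) := by
  classical
  have hAind : iSupIndep A := hRind.mono hAR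
  have fAJ : ∀ S : Finset (Fin d), finrank ℝ ↥(⨆ j ∈ S, A j) = S.card := by
    intro S
    rw [finrank_biSup A hAind S]
    simp [hA1]
  have fA : finrank ℝ ↥(⨆ j, A j) = d := by
    rw [← iSup_finset_univ A, fAJ]
    simp
  have hen : e ≤ n := by omega
  constructor
  · intro h J hJ B hB hBe
    have h1 : (⨆ j ∈ J, A j) ⊓ B ≤ (⨆ j, A j) ⊓ B :=
      inf_le_inf_right B (iSup₂_le fun j _ => le_iSup A j)
    have h2 := Submodule.finrank_mono h1
    have h3 := h B hB hBe
    rw [fA] at h3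
    rw [fAJ J, hJ]
    omega
  · intro hall B hB hBe
    rw [fA]
    by_contra hcon
    push_neg at hcon
    set W : Submodule ℝ (EuclideanSpace ℝ (Fin n)) := (⨆ j, A j) ⊓ B with hWdef
    have hW_le : W ≤ ⨆ j, A j := inf_le_left
    have hWB : W ≤ B := inf_le_right
    obtain ⟨J₀, hJ₀card, hJ₀dis⟩ := selection A hAind hA1 W hW_le
    have hmw : k + (d + e - n) ≤ J₀.card := by rw [hJ₀card]; exact hcon
    obtain ⟨J, hJsub, hJcard⟩ := Finset.exists_subset_card_eq hmw
    obtain ⟨f, hfid, hf0, hfrat⟩ := exists_proj d R hRrat hRind J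
    obtain ⟨f₀, hf₀id, hf₀0, _⟩ := exists_proj d R hRrat hRind J₀
    have hdecomp : ∀ x ∈ (⨆ j, A j), ∃ a : Fin d → EuclideanSpace ℝ (Fin n),
        (∀ j, a j ∈ A j) ∧ x = ∑ j, a j := by
      intro x hx
      rw [← iSup_finset_univ A] at hx
      obtain ⟨a, ha, rfl⟩ := (mem_biSup_iff A Finset.univ x).mp hx
      exact ⟨a, ha, rfl⟩
    have hproj : ∀ a : Fin d → EuclideanSpace ℝ (Fin n), (∀ j, a j ∈ A j) →
        f₀ (∑ j, a j) = ∑ j ∈ J₀, a j := by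
      intro a ha
      rw [map_sum, ← Finset.sum_subset (Finset.subset_univ J₀)
        (fun j _ hj => hf₀0 j hj (a j) (hAR j (ha j)))]
      exact Finset.sum_congr rfl fun j hj => hf₀id j hj (a j) (hAR j (ha j))
    have hker : ∀ x ∈ W, f₀ x = 0 → x = 0 := by
      intro x hxW hx0
      obtain ⟨a, ha, rfl⟩ := hdecomp x (hW_le hxW)
      rw [hproj a ha] at hx0
      have hz := sum_eq_zero_of_indep hAind a ha J₀ hx0
      have hxJc : (∑ j, a j) ∈ ⨆ j ∈ J₀ᶜ, A j := by
        have hsp : (∑ j, a j) = ∑ j ∈ J₀ᶜ, a j := by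
          rw [← Finset.sum_add_sum_compl J₀ a, Finset.sum_eq_zero hz, zero_add]
        rw [hsp]
        exact (mem_biSup_iff A J₀ᶜ _).mpr ⟨a, ha, rfl⟩
      exact (disjoint_def.mp hJ₀dis) _ hxW hxJc
    have hrange : Submodule.map f₀ W = ⨆ j ∈ J₀, A j := by
      refine Submodule.eq_of_le_of_finrank_eq ?_ ?_
      · intro y hy
        obtain ⟨x, hxW, rfl⟩ := Submodule.mem_map.mp hy
        obtain ⟨a, ha, rfl⟩ := hdecomp x (hW_le hxW)
        rw [hproj a ha]
        exact (mem_biSup_iff A J₀ _).mpr ⟨a, ha, rfl⟩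
      · have hkerres : LinearMap.ker (f₀.domRestrict W) = ⊥ := by
          rw [LinearMap.ker_eq_bot']
          intro x hx
          have hx0 : (x : EuclideanSpace ℝ (Fin n)) = 0 :=
            hker x x.2 (by simpa using hx)
          exact Subtype.ext hx0
        have h5 := LinearMap.finrank_range_add_finrank_ker (f₀.domRestrict W)
        rw [hkerres, finrank_bot, add_zero, LinearMap.range_domRestrict] at h5
        rw [show Submodule.map f₀ W = W.map f₀ from rfl, h5, fAJ J₀, hJ₀card]
    have hcomm : ∀ x ∈ (⨆ j, A j), f (f₀ x) = f x := by
      have hle : (⨆ j, A j) ≤ LinearMap.eqLocus (f ∘ₗ f₀) f := by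
        refine iSup_le fun j => ?_
        intro v hv
        have hvR : v ∈ R j := hAR j hv
        rw [LinearMap.mem_eqLocus, LinearMap.comp_apply]
        by_cases hj : j ∈ J₀
        · rw [hf₀id j hj v hvR]
        · rw [hf₀0 j hj v hvR, map_zero, hf0 j (fun hjJ => hj (hJsub hjJ)) v hvR]
      intro x hx
      have hx2 := hle hx
      rw [LinearMap.mem_eqLocus] at hx2
      simpa [LinearMap.comp_apply] using hx2
    have hAJ_sub : (⨆ j ∈ J, A j) ≤ Submodule.map f B := by
      intro x hx
      have hxJ0 : x ∈ ⨆ j ∈ J₀, A j :=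
        (biSup_mono (f := A) (fun j (hj : j ∈ J) => hJsub hj)) hx
      rw [← hrange] at hxJ0
      obtain ⟨w, hwW, hwx⟩ := Submodule.mem_map.mp hxJ0
      have hfx : f x = x := by
        have hle2 : (⨆ j ∈ J, A j) ≤ LinearMap.eqLocus f LinearMap.id :=
          iSup₂_le fun j hj => fun v hv => LinearMap.mem_eqLocus.mpr (by
            simpa using hfid j hj v (hAR j hv))
        have hx3 := hle2 hx
        rw [LinearMap.mem_eqLocus] at hx3
        simpa using hx3
      have hx4 : x = f w := by rw [← hfx, ← hwx, hcomm w (hW_le hwW)]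
      exact ⟨w, hWB hwW, hx4.symm⟩
    set C := Submodule.map f B with hC
    have hCrat : IsRationalSubspace C := hfrat B hB
    have hCrank : finrank ℝ C ≤ e := by
      rw [← hBe]
      exact Submodule.finrank_map_le f B
    obtain ⟨B', hB'rat, hCB', hB'rank⟩ :=
      rat_extend (e - finrank ℝ C) C e hCrat (by omega) hen
    have hfinal := hall J hJcard B' hB'rat hB'rank
    have hAJB' : (⨆ j ∈ J, A j) ≤ B' := le_trans hAJ_sub hCB'
    have hinf : (⨆ j ∈ J, A j) ⊓ B' = (⨆ j ∈ J, A j) := inf_eq_left.mpr hAJB'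
    rw [hinf, fAJ J, hJcard] at hfinal
    omega
end
end

section
/- Let n ≥ 1 and let R₁,…,R_d be subspaces of ℝ^n spanned by pairwise disjoint subsets of the standard basis of ℝ^n; for each j let p_j be the orthogonal projection onto R_j and p̂_j = id − p_j. Let J ⊆ {1,…,d} be nonempty and let C' be a linear subspace of ℝ^n with dim C' < #J. Then there exists j ∈ J such that for every X ∈ C', ‖p̂_j(X)‖ ≥ ‖X‖ / √(n² + 1). -/
noncomputable section

open scoped RealInnerProductSpace

namespace ProjAux

variable {n : ℕ}

open Classical in
def P (s : Set (Fin n)) (X : EuclideanSpace ℝ (Fin n)) : EuclideanSpace ℝ (Fin n) :=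
  WithLp.toLp 2 (fun i => if i ∈ s then X i else 0)

open Classical

lemma P_apply (s : Set (Fin n)) (X : EuclideanSpace ℝ (Fin n)) (i : Fin n) :
    P s X i = if i ∈ s then X i else 0 := rfl

lemma norm_sq_eq (X : EuclideanSpace ℝ (Fin n)) : ‖X‖ ^ 2 = ∑ i, X i ^ 2 := by
  rw [EuclideanSpace.norm_eq, Real.sq_sqrt (by positivity)]
  simp [sq_abs]

lemma pythagoras (s : Set (Fin n)) (X : EuclideanSpace ℝ (Fin n)) :
    ‖X‖ ^ 2 = ‖P s X‖ ^ 2 + ‖X - P s X‖ ^ 2 := by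
  simp only [norm_sq_eq, ← Finset.sum_add_distrib]
  refine Finset.sum_congr rfl fun i _ => ?_
  simp only [PiLp.sub_apply, P_apply]
  split_ifs <;> ring

lemma norm_P_le (s : Set (Fin n)) (X : EuclideanSpace ℝ (Fin n)) : ‖P s X‖ ≤ ‖X‖ := by
  have h := pythagoras s X
  nlinarith [norm_nonneg (P s X), norm_nonneg X, sq_nonneg ‖X - P s X‖]

lemma P_smul (s : Set (Fin n)) (a : ℝ) (X : EuclideanSpace ℝ (Fin n)) :
    P s (a • X) = a • P s X := by
  ext i
  simp only [P_apply, PiLp.smul_apply, smul_eq_mul]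
  split_ifs <;> simp

lemma P_sub_P (s t : Set (Fin n)) (hd : Disjoint s t) (X : EuclideanSpace ℝ (Fin n)) :
    P s (X - P t X) = P s X := by
  ext i
  simp only [P_apply, PiLp.sub_apply]
  split_ifs with h1 h2
  · exact absurd (Set.disjoint_left.1 hd h1) (by simp [h2])
  · ring
  · rfl

lemma P_sum {ι : Type*} (s : Set (Fin n)) (t : Finset ι) (f : ι → EuclideanSpace ℝ (Fin n)) :
    P s (∑ k ∈ t, f k) = ∑ k ∈ t, P s (f k) := by
  ext i
  have h1 : (∑ k ∈ t, P s (f k)) i = ∑ k ∈ t, P s (f k) i := by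
    rw [WithLp.ofLp_sum, Finset.sum_apply]
  have h2 : (∑ k ∈ t, f k) i = ∑ k ∈ t, f k i := by
    rw [WithLp.ofLp_sum, Finset.sum_apply]
  rw [h1]
  simp only [P_apply, h2]
  split_ifs with h
  · exact Finset.sum_congr rfl fun k _ => by simp [h]
  · exact (Finset.sum_eq_zero fun k _ => by simp [h]).symm

lemma P_mem_span (s : Set (Fin n)) (X : EuclideanSpace ℝ (Fin n)) :
    P s X ∈ Submodule.span ℝ ((fun i => EuclideanSpace.single i (1 : ℝ)) '' s) := by
  have : P s X = ∑ i ∈ Finset.univ.filter (· ∈ s), X i • EuclideanSpace.single i (1 : ℝ) := by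
    ext j
    rw [WithLp.ofLp_sum, Finset.sum_apply]
    simp only [P_apply, PiLp.smul_apply, EuclideanSpace.single_apply, smul_eq_mul,
      mul_ite, mul_one, mul_zero]
    rw [Finset.sum_ite_eq (Finset.univ.filter (· ∈ s)) j X]
    simp
  rw [this]
  refine Submodule.sum_mem _ fun i hi => Submodule.smul_mem _ _ (Submodule.subset_span ?_)
  exact ⟨i, by simpa using hi, rfl⟩

lemma proj_eq (s : Set (Fin n)) (X : EuclideanSpace ℝ (Fin n)) :
    ((Submodule.span ℝ ((fun i => EuclideanSpace.single i (1 : ℝ)) '' s)).orthogonalProjection X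
      : EuclideanSpace ℝ (Fin n)) = P s X := by
  refine (Submodule.eq_starProjection_of_mem_of_inner_eq_zero (P_mem_span s X) fun w hw => ?_ :)
  induction hw using Submodule.span_induction with
  | mem w hw =>
    obtain ⟨i, hi, rfl⟩ := hw
    rw [real_inner_comm, EuclideanSpace.inner_single_left]
    simp [PiLp.sub_apply, P_apply, hi]
  | zero => simp
  | add _ _ _ _ h1 h2 => rw [inner_add_right, h1, h2, add_zero]
  | smul a _ _ h => rw [inner_smul_right, h, mul_zero]

end ProjAux


open ProjAux

/-- Let `R₁, …, R_d` be subspaces of `ℝ^n` spanned by pairwise disjoint subsets of the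
standard basis, and let `p̂_j = id - (orthogonal projection onto R_j)`.  For every nonempty
`J ⊆ {1, …, d}` and every subspace `C'` with `dim C' < #J`, there is `j ∈ J` such that
`‖p̂_j X‖ ≥ ‖X‖ / √(n² + 1)` for all `X ∈ C'`. -/
theorem exists_proj_complement_lower_bound (n d : ℕ) (hn : 1 ≤ n)
    (S : Fin d → Set (Fin n)) (hS : Pairwise (Function.onFun Disjoint S))
    (R : Fin d → Submodule ℝ (EuclideanSpace ℝ (Fin n)))
    (hR : ∀ j, R j = Submodule.span ℝ ((fun i => EuclideanSpace.single i (1 : ℝ)) '' S j))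
    (J : Finset (Fin d)) (hJ : J.Nonempty)
    (C' : Submodule ℝ (EuclideanSpace ℝ (Fin n)))
    (hC' : Module.finrank ℝ C' < J.card) :
    ∃ j ∈ J, ∀ X ∈ C',
      ‖X‖ / Real.sqrt ((n : ℝ) ^ 2 + 1) ≤
        ‖X - ((R j).orthogonalProjection X : EuclideanSpace ℝ (Fin n))‖ := by
  classical
  set c : ℝ := Real.sqrt ((n : ℝ) ^ 2 + 1) with hc
  have hcsq : c ^ 2 = (n : ℝ) ^ 2 + 1 := Real.sq_sqrt (by positivity)
  have hc0 : 0 < c := Real.sqrt_pos.2 (by positivity)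
  have hc1 : (1 : ℝ) ≤ c := by nlinarith
  have hproj : ∀ j (X : EuclideanSpace ℝ (Fin n)),
      ((R j).orthogonalProjection X : EuclideanSpace ℝ (Fin n)) = P (S j) X := by
    intro j X; rw [hR j]; exact proj_eq _ _
  by_contra hcon
  push_neg at hcon
  -- each S j, j ∈ J, is nonempty
  have hSne : ∀ j ∈ J, (S j).Nonempty := by
    intro j hj
    by_contra hemp
    rw [Set.not_nonempty_iff_eq_empty] at hemp
    obtain ⟨X, hX, hlt⟩ := hcon j hj
    rw [hproj] at hlt
    have hP0 : P (S j) X = 0 := by ext i; simp [P_apply, hemp]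
    rw [hP0, sub_zero] at hlt
    have := div_le_self (norm_nonneg X) hc1
    linarith
  -- |J| ≤ n
  have hJn : J.card ≤ n := by
    have : J.card ≤ (Finset.univ : Finset (Fin n)).card := by
      refine Finset.card_le_card_of_injOn
        (fun j => if h : (S j).Nonempty then h.choose else ⟨0, hn⟩)
        (fun a _ => Finset.mem_univ _) ?_
      intro a ha b hb hab
      by_contra hne
      have hd : Disjoint (S a) (S b) := hS hne
      dsimp only at hab
      rw [dif_pos (hSne a ha), dif_pos (hSne b hb)] at hab
      exact Set.disjoint_left.1 hd (hSne a ha).choose_spec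
        (hab ▸ (hSne b hb).choose_spec)
    simpa using this
  choose X hXmem hXlt using fun (j : Fin d) (hj : j ∈ J) => hcon j hj
  have hXne : ∀ j hj, X j hj ≠ 0 := by
    intro j hj h0
    have := hXlt j hj
    rw [h0] at this
    simp only [map_zero, norm_zero, zero_div, ZeroMemClass.coe_zero, sub_zero] at this
    exact absurd this (by simp)
  set Y : ↑J → EuclideanSpace ℝ (Fin n) :=
    fun j => ‖X j.1 j.2‖⁻¹ • X j.1 j.2 with hYdef
  have hXpos : ∀ j : ↑J, 0 < ‖X j.1 j.2‖ := fun j => norm_pos_iff.2 (hXne j.1 j.2)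
  have hYmem : ∀ j : ↑J, Y j ∈ C' := fun j => C'.smul_mem _ (hXmem j.1 j.2)
  have hY1 : ∀ j : ↑J, ‖Y j‖ = 1 := by
    intro j
    rw [hYdef]
    simp only [norm_smul, norm_inv, norm_norm]
    exact inv_mul_cancel₀ (hXpos j).ne'
  have hsmall : ∀ j : ↑J, ‖Y j - P (S j.1) (Y j)‖ < 1 / c := by
    intro j
    have hlt := hXlt j.1 j.2
    rw [hproj] at hlt
    rw [hYdef]
    simp only
    rw [P_smul, ← smul_sub, norm_smul, norm_inv, norm_norm]
    rw [div_eq_mul_inv, one_mul]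
    calc ‖X j.1 j.2‖⁻¹ * ‖X j.1 j.2 - P (S j.1) (X j.1 j.2)‖
        < ‖X j.1 j.2‖⁻¹ * (‖X j.1 j.2‖ / c) := by
          exact mul_lt_mul_of_pos_left hlt (inv_pos.2 (hXpos j))
      _ = c⁻¹ := by
          rw [div_eq_mul_inv, ← mul_assoc, inv_mul_cancel₀ (hXpos j).ne', one_mul]
  have hbig : ∀ j : ↑J, (n : ℝ) / c < ‖P (S j.1) (Y j)‖ := by
    intro j
    have hpy := pythagoras (S j.1) (Y j)
    rw [hY1 j, one_pow] at hpy
    have hs := hsmall j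
    have hs2 : ‖Y j - P (S j.1) (Y j)‖ ^ 2 < (1 / c) ^ 2 := by
      apply pow_lt_pow_left₀ hs (norm_nonneg _)
      norm_num
    refine lt_of_pow_lt_pow_left₀ 2 (norm_nonneg _) ?_
    have h1c : (1 / c) ^ 2 = 1 / (((n : ℝ)) ^ 2 + 1) := by
      rw [div_pow, one_pow, hcsq]
    have hnc : ((n : ℝ) / c) ^ 2 = (n : ℝ) ^ 2 / ((n : ℝ) ^ 2 + 1) := by
      rw [div_pow, hcsq]
    rw [hnc]
    rw [h1c] at hs2
    have hpos : (0 : ℝ) < (n : ℝ) ^ 2 + 1 := by positivity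
    rw [lt_div_iff₀ hpos] at hs2
    rw [div_lt_iff₀ hpos]
    nlinarith
  have hcross : ∀ j k : ↑J, j ≠ k → ‖P (S j.1) (Y k)‖ ≤ 1 / c := by
    intro j k hjk
    have hd : Disjoint (S j.1) (S k.1) := hS (fun h => hjk (Subtype.ext h))
    have : P (S j.1) (Y k) = P (S j.1) (Y k - P (S k.1) (Y k)) :=
      (P_sub_P _ _ hd _).symm
    rw [this]
    exact le_trans (norm_P_le _ _) (hsmall k).le
  -- linear independence
  have hli : LinearIndependent ℝ Y := by
    rw [Fintype.linearIndependent_iff]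
    intro g hg
    by_contra hgn
    push_neg at hgn
    obtain ⟨i0, hi0⟩ := hgn
    obtain ⟨j0, -, hj0max⟩ := Finset.exists_max_image (Finset.univ : Finset ↑J)
      (fun j => |g j|) ⟨i0, Finset.mem_univ _⟩
    have hgj0 : 0 < |g j0| := lt_of_lt_of_le (abs_pos.2 hi0) (hj0max i0 (Finset.mem_univ _))
    have h0 : ∑ k, g k • P (S j0.1) (Y k) = 0 := by
      have h := congrArg (P (S j0.1)) hg
      rw [P_sum] at h
      simp_rw [P_smul] at h
      rw [h]
      ext i; simp [P_apply]
    rw [← Finset.add_sum_erase _ _ (Finset.mem_univ j0)] at h0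
    have hsplit : g j0 • P (S j0.1) (Y j0) =
        -∑ k ∈ Finset.univ.erase j0, g k • P (S j0.1) (Y k) :=
      eq_neg_of_add_eq_zero_left h0
    have hbound : |g j0| * ‖P (S j0.1) (Y j0)‖ ≤
        ((Finset.univ.erase j0).card : ℝ) * (|g j0| * (1 / c)) := by
      calc |g j0| * ‖P (S j0.1) (Y j0)‖ = ‖g j0 • P (S j0.1) (Y j0)‖ := by
            rw [norm_smul, Real.norm_eq_abs]
        _ = ‖∑ k ∈ Finset.univ.erase j0, g k • P (S j0.1) (Y k)‖ := by
            rw [hsplit, norm_neg]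
        _ ≤ ∑ k ∈ Finset.univ.erase j0, ‖g k • P (S j0.1) (Y k)‖ := norm_sum_le _ _
        _ ≤ ∑ _k ∈ Finset.univ.erase j0, |g j0| * (1 / c) := by
            refine Finset.sum_le_sum fun k hk => ?_
            rw [norm_smul, Real.norm_eq_abs]
            exact mul_le_mul (hj0max k (Finset.mem_univ _))
              (hcross j0 k (Ne.symm (Finset.ne_of_mem_erase hk)))
              (norm_nonneg _) (abs_nonneg _)
        _ = ((Finset.univ.erase j0).card : ℝ) * (|g j0| * (1 / c)) := by
            rw [Finset.sum_const, nsmul_eq_mul]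
    have hcard : ((Finset.univ.erase j0).card : ℝ) ≤ (n : ℝ) - 1 := by
      rw [Finset.card_erase_of_mem (Finset.mem_univ _), Finset.card_univ, Fintype.card_coe]
      have h1 : 1 ≤ J.card := hJ.card_pos
      rw [Nat.cast_sub h1]
      have : (J.card : ℝ) ≤ (n : ℝ) := by exact_mod_cast hJn
      push_cast
      linarith
    have hb := hbig j0
    have h1 : |g j0| * ((n : ℝ) / c) < |g j0| * ‖P (S j0.1) (Y j0)‖ :=
      mul_lt_mul_of_pos_left hb hgj0
    have h2 : ((Finset.univ.erase j0).card : ℝ) * (|g j0| * (1 / c)) ≤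
        ((n : ℝ) - 1) * (|g j0| * (1 / c)) := by
      apply mul_le_mul_of_nonneg_right hcard
      positivity
    have hfin : |g j0| * ((n : ℝ) / c) < ((n : ℝ) - 1) * (|g j0| * (1 / c)) := by
      linarith
    rw [div_eq_mul_inv, div_eq_mul_inv, one_mul] at hfin
    have hfin' : |g j0| * (n : ℝ) * c⁻¹ < ((n : ℝ) - 1) * |g j0| * c⁻¹ := by
      linear_combination hfin
    have hkey := lt_of_mul_lt_mul_right hfin' (inv_nonneg.2 hc0.le)
    have hn1 : (1 : ℝ) ≤ (n : ℝ) := by exact_mod_cast hn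
    nlinarith [hgj0, hn1, hkey]
  -- derive dimension contradiction
  have hle : J.card ≤ Module.finrank ℝ C' := by
    have hw : LinearIndependent ℝ (fun j : ↑J => (⟨Y j, hYmem j⟩ : C')) :=
      LinearIndependent.of_comp C'.subtype hli
    have := hw.fintype_card_le_finrank
    simpa [Fintype.card_coe] using this
  omega

end
end

section
/- In the setting below, let k ∈ [1,d], e ∈ [k, k(m+1)−1] and 1 ≤ j₁ < j₂ < … < j_k ≤ d. Then for every q ∈ [1,k], one has (K_{j_q, v_q−1})^{c₂} ≤ K_{j_{u+1}, v_{u+1}} ≤ K_{j_q, v_q}. -/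
noncomputable section

/-- `K_{i,v} = max_{0 ≤ ℓ ≤ m+1-v} β_{i,ℓ+1} β_{i,ℓ+2} ⋯ β_{i,ℓ+v}` (an empty product
equals `1`, so `K_{i,0} = 1`). -/
def Kmax (m : ℕ) (β : ℕ → ℕ → ℝ) (i v : ℕ) : ℝ :=
  sSup ((fun ℓ => ∏ t ∈ Finset.range v, β i (ℓ + 1 + t)) '' Set.Iic (m + 1 - v))

/-- For the euclidean division `e = k·v + u`, `vq k e q` is `v + 1` if `q ∈ [1, u]` and `v`
if `q ∈ [u+1, k]`. -/
def vq (k e q : ℕ) : ℕ := if q ≤ e % k then e / k + 1 else e / k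

lemma prod_le_Kmax (m : ℕ) (β : ℕ → ℕ → ℝ) (i v ℓ : ℕ) (h : ℓ ≤ m + 1 - v) :
    ∏ t ∈ Finset.range v, β i (ℓ + 1 + t) ≤ Kmax m β i v :=
  le_csSup (((Set.finite_Iic _).image _).bddAbove) ⟨ℓ, Set.mem_Iic.2 h, rfl⟩

lemma Kmax_le (m : ℕ) (β : ℕ → ℕ → ℝ) (i v : ℕ) (B : ℝ)
    (h : ∀ ℓ, ℓ ≤ m + 1 - v → ∏ t ∈ Finset.range v, β i (ℓ + 1 + t) ≤ B) :
    Kmax m β i v ≤ B := by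
  refine csSup_le ⟨_, ⟨0, Set.mem_Iic.2 (Nat.zero_le _), rfl⟩⟩ ?_
  rintro x ⟨ℓ, hℓ, rfl⟩; exact h ℓ (Set.mem_Iic.1 hℓ)

/-- Under the hypotheses (H1)–(H3) on the family `(β_{i,ℓ})`, for `k ∈ [1,d]`,
`e ∈ [k, k(m+1)-1]`, `1 ≤ j₁ < ⋯ < j_k ≤ d`, and `q ∈ [1,k]`, one has
`(K_{j_q, v_q - 1})^{c₂} ≤ K_{j_{u+1}, v_{u+1}} ≤ K_{j_q, v_q}`, where `u = e % k`. -/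
theorem Kmax_growth (m d : ℕ) (hm : 1 ≤ m) (hd : 1 ≤ d)
    (c₁ c₂ : ℝ) (hc₁ : c₁ = (1 + 1 / (m : ℝ)) ^ ((d : ℝ)⁻¹))
    (hc₂ : 1 < c₂) (hc₂' : c₂ < c₁)
    (β : ℕ → ℕ → ℝ)
    (hβpos : ∀ i ℓ, 1 ≤ i → i ≤ d → 1 ≤ ℓ → ℓ ≤ m + 1 → 0 < β i ℓ)
    -- (H1): `min_ℓ β_{1,ℓ} ≥ (max_ℓ β_{1,ℓ})^(c₂/c₁)` and `min_ℓ β_{1,ℓ} ≥ (3d)^(c₂/(c₂-1))`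
    (H1a : ∀ ℓ ℓ', 1 ≤ ℓ → ℓ ≤ m + 1 → 1 ≤ ℓ' → ℓ' ≤ m + 1 →
      (β 1 ℓ') ^ (c₂ / c₁) ≤ β 1 ℓ)
    (H1b : ∀ ℓ, 1 ≤ ℓ → ℓ ≤ m + 1 → ((3 * d : ℝ)) ^ (c₂ / (c₂ - 1)) ≤ β 1 ℓ)
    -- (H2): `(min_ℓ β_{i,ℓ})^{c₁} ≥ max_ℓ β_{i+1,ℓ}`
    (H2 : ∀ i ℓ ℓ', 1 ≤ i → i ≤ d - 1 → 1 ≤ ℓ → ℓ ≤ m + 1 → 1 ≤ ℓ' → ℓ' ≤ m + 1 →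
      β (i + 1) ℓ' ≤ (β i ℓ) ^ c₁)
    -- (H3): `min_ℓ β_{i+1,ℓ} ≥ (max_ℓ β_{i,ℓ})^{c₂}`
    (H3 : ∀ i ℓ ℓ', 1 ≤ i → i ≤ d - 1 → 1 ≤ ℓ → ℓ ≤ m + 1 → 1 ≤ ℓ' → ℓ' ≤ m + 1 →
      (β i ℓ') ^ c₂ ≤ β (i + 1) ℓ)
    (k e : ℕ) (hk1 : 1 ≤ k) (hk2 : k ≤ d) (he1 : k ≤ e) (he2 : e ≤ k * (m + 1) - 1)
    (j : ℕ → ℕ)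
    (hjmono : ∀ q q', 1 ≤ q → q < q' → q' ≤ k → j q < j q')
    (hjrange : ∀ q, 1 ≤ q → q ≤ k → 1 ≤ j q ∧ j q ≤ d)
    (q : ℕ) (hq1 : 1 ≤ q) (hq2 : q ≤ k) :
    (Kmax m β (j q) (vq k e q - 1)) ^ c₂ ≤ Kmax m β (j (e % k + 1)) (vq k e (e % k + 1)) ∧
      Kmax m β (j (e % k + 1)) (vq k e (e % k + 1)) ≤ Kmax m β (j q) (vq k e q) := by
  have hm0 : (0:ℝ) < m := by exact_mod_cast hm
  have hd0 : (d:ℝ) ≠ 0 := by positivity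
  have hc₂0 : (0:ℝ) < c₂ := by linarith
  have hc₁1 : 1 < c₁ := lt_trans hc₂ hc₂'
  have hc₁0 : (0:ℝ) < c₁ := by linarith
  have hc₁d : c₁ ^ d = 1 + 1/(m:ℝ) := by
    rw [hc₁, ← Real.rpow_natCast ((1 + 1/(m:ℝ)) ^ ((d:ℝ)⁻¹)) d,
      ← Real.rpow_mul (by positivity), inv_mul_cancel₀ hd0, Real.rpow_one]
  -- all β > 1
  have hone : ∀ i, 1 ≤ i → i ≤ d → ∀ ℓ, 1 ≤ ℓ → ℓ ≤ m + 1 → 1 < β i ℓ := by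
    intro i hi1
    induction i, hi1 using Nat.le_induction with
    | base =>
      intro _ ℓ h1 h2
      have h3d : (1:ℝ) < 3 * d := by
        have : (1:ℝ) ≤ d := by exact_mod_cast hd
        linarith
      calc (1:ℝ) < (3*(d:ℝ)) ^ (c₂/(c₂-1)) :=
            (Real.one_lt_rpow_iff_of_pos (by linarith)).2
              (Or.inl ⟨h3d, div_pos (by linarith) (by linarith)⟩)
        _ ≤ β 1 ℓ := H1b ℓ h1 h2
    | succ i hi ih =>
      intro hid ℓ h1 h2
      have hβ := ih (by omega) ℓ h1 h2
      calc (1:ℝ) < β i ℓ := hβ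
        _ ≤ β i ℓ ^ c₂ := by
            nth_rewrite 1 [← Real.rpow_one (β i ℓ)]
            exact Real.rpow_le_rpow_of_exponent_le hβ.le hc₂.le
        _ ≤ β (i+1) ℓ := H3 i ℓ ℓ hi (by omega) h1 h2 h1 h2
  -- cross step with c₂ power
  have hcross : ∀ i i', 1 ≤ i → i < i' → i' ≤ d → ∀ ℓ ℓ', 1 ≤ ℓ → ℓ ≤ m+1 → 1 ≤ ℓ' → ℓ' ≤ m+1 →
      β i ℓ ^ c₂ ≤ β i' ℓ' := by
    intro i i' hi1 hii' 
    induction i' with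
    | zero => omega
    | succ i' ih =>
      intro hi'd ℓ ℓ' h1 h2 h3 h4
      rcases Nat.lt_or_ge i i' with h | h
      · calc β i ℓ ^ c₂ ≤ β i' ℓ := ih h (by omega) ℓ ℓ h1 h2 h1 h2
          _ ≤ β i' ℓ ^ c₂ := by
            nth_rewrite 1 [← Real.rpow_one (β i' ℓ)]
            exact Real.rpow_le_rpow_of_exponent_le (hone i' (by omega) (by omega) ℓ h1 h2).le hc₂.le
          _ ≤ β (i'+1) ℓ' := H3 i' ℓ' ℓ (by omega) (by omega) h3 h4 h1 h2
      · have : i = i' := by omega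
        subst this
        exact H3 i ℓ' ℓ hi1 (by omega) h3 h4 h1 h2
  have hmono : ∀ i i', 1 ≤ i → i < i' → i' ≤ d → ∀ ℓ ℓ', 1 ≤ ℓ → ℓ ≤ m+1 → 1 ≤ ℓ' → ℓ' ≤ m+1 →
      β i ℓ ≤ β i' ℓ' := by
    intro i i' hi1 hii' hi'd ℓ ℓ' h1 h2 h3 h4
    calc β i ℓ ≤ β i ℓ ^ c₂ := by
          nth_rewrite 1 [← Real.rpow_one (β i ℓ)]
          exact Real.rpow_le_rpow_of_exponent_le (hone i hi1 (by omega) ℓ h1 h2).le hc₂.le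
      _ ≤ β i' ℓ' := hcross i i' hi1 hii' hi'd ℓ ℓ' h1 h2 h3 h4
  -- minimum attainer in each row
  have hμex : ∀ i : ℕ, ∃ ℓ₀ ∈ Finset.Icc 1 (m+1), ∀ ℓ ∈ Finset.Icc 1 (m+1), β i ℓ₀ ≤ β i ℓ :=
    fun i => Finset.exists_min_image (Finset.Icc 1 (m+1)) (β i) ⟨1, by simp⟩
  choose μ hμmem hμmin using hμex
  have hμ1 : ∀ i, 1 ≤ μ i := fun i => (Finset.mem_Icc.1 (hμmem i)).1
  have hμ2 : ∀ i, μ i ≤ m + 1 := fun i => (Finset.mem_Icc.1 (hμmem i)).2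
  have hμle : ∀ i ℓ, 1 ≤ ℓ → ℓ ≤ m + 1 → β i (μ i) ≤ β i ℓ :=
    fun i ℓ h1 h2 => hμmin i ℓ (Finset.mem_Icc.2 ⟨h1, h2⟩)
  have hmn1 : ∀ i, 1 ≤ i → i ≤ d → 1 < β i (μ i) := fun i h1 h2 => hone i h1 h2 _ (hμ1 i) (hμ2 i)
  -- row spread : β i ℓ ≤ (mn i)^(c₁/c₂)
  have hrow : ∀ i, 1 ≤ i → i ≤ d → ∀ ℓ, 1 ≤ ℓ → ℓ ≤ m + 1 → β i ℓ ≤ β i (μ i) ^ (c₁/c₂) := by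
    intro i hi1 hid ℓ h1 h2
    rcases Nat.lt_or_ge 1 i with h | h
    · -- i ≥ 2 : use H2 and H3 at row i-1
      obtain ⟨i', rfl⟩ : ∃ i', i = i' + 1 := ⟨i - 1, by omega⟩
      calc β (i'+1) ℓ ≤ β i' 1 ^ c₁ := H2 i' 1 ℓ (by omega) (by omega) le_rfl (by omega) h1 h2
        _ = (β i' 1 ^ c₂) ^ (c₁/c₂) := by
            rw [← Real.rpow_mul (hβpos i' 1 (by omega) (by omega) le_rfl (by omega)).le,
              mul_div_cancel₀ _ (by linarith : c₂ ≠ 0)]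
        _ ≤ β (i'+1) (μ (i'+1)) ^ (c₁/c₂) := by
            apply Real.rpow_le_rpow (Real.rpow_nonneg (hβpos i' 1 (by omega) (by omega) le_rfl (by omega)).le _)
              (H3 i' (μ (i'+1)) 1 (by omega) (by omega) (hμ1 _) (hμ2 _) le_rfl (by omega))
              (div_nonneg hc₁0.le hc₂0.le)
    · have : i = 1 := by omega
      subst this
      have := H1a (μ 1) ℓ (hμ1 1) (hμ2 1) h1 h2
      calc β 1 ℓ = (β 1 ℓ ^ (c₂/c₁)) ^ (c₁/c₂) := by
            rw [← Real.rpow_mul (hβpos 1 ℓ le_rfl hd h1 h2).le,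
              div_mul_div_comm, mul_comm, div_self (by positivity)]
            exact (Real.rpow_one _).symm
        _ ≤ β 1 (μ 1) ^ (c₁/c₂) := Real.rpow_le_rpow (Real.rpow_nonneg (hβpos 1 ℓ le_rfl hd h1 h2).le _) this (div_nonneg hc₁0.le hc₂0.le)
  -- iterated H2 : β i' ℓ ≤ (mn i)^((c₁/c₂) * c₁^(i'-i))
  have hE : ∀ i, 1 ≤ i → ∀ i', i ≤ i' → i' ≤ d → ∀ ℓ, 1 ≤ ℓ → ℓ ≤ m + 1 →
      β i' ℓ ≤ β i (μ i) ^ ((c₁/c₂) * c₁ ^ (i' - i)) := by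
    intro i hi1 i' hii'
    induction i', hii' using Nat.le_induction with
    | base =>
      intro hid ℓ h1 h2
      simpa using hrow i hi1 hid ℓ h1 h2
    | succ i' hii' ih =>
      intro hid ℓ h1 h2
      have hmem := ih (by omega) (μ i') (hμ1 i') (hμ2 i')
      calc β (i'+1) ℓ ≤ β i' (μ i') ^ c₁ := H2 i' (μ i') ℓ (by omega) (by omega) (hμ1 i') (hμ2 i') h1 h2
        _ ≤ (β i (μ i) ^ ((c₁/c₂) * c₁ ^ (i' - i))) ^ c₁ :=
            Real.rpow_le_rpow (hβpos i' (μ i') (by omega) (by omega) (hμ1 i') (hμ2 i')).le hmem hc₁0.le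
        _ = β i (μ i) ^ ((c₁/c₂) * c₁ ^ (i' + 1 - i)) := by
            rw [← Real.rpow_mul (hβpos i (μ i) hi1 (by omega) (hμ1 i) (hμ2 i)).le]
            congr 1
            rw [Nat.succ_sub hii', pow_succ]
            ring
  -- K upper bound
  have hA : ∀ i, 1 ≤ i → ∀ i', i ≤ i' → i' ≤ d → ∀ w, w ≤ m + 1 →
      Kmax m β i' w ≤ β i (μ i) ^ ((c₁/c₂) * c₁ ^ (i' - i) * w) := by
    intro i hi1 i' hii' hid w hw
    apply Kmax_le
    intro ℓ hℓ
    have hsub : ℓ + w ≤ m + 1 := by omega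
    calc ∏ t ∈ Finset.range w, β i' (ℓ + 1 + t)
        ≤ ∏ _t ∈ Finset.range w, β i (μ i) ^ ((c₁/c₂) * c₁ ^ (i' - i)) := by
          apply Finset.prod_le_prod
          · intro t ht
            exact (hβpos i' (ℓ+1+t) (by omega) hid (by omega)
              (by have := Finset.mem_range.1 ht; omega)).le
          · intro t ht
            exact hE i hi1 i' hii' hid (ℓ+1+t) (by omega)
              (by have := Finset.mem_range.1 ht; omega)
      _ = β i (μ i) ^ ((c₁/c₂) * c₁ ^ (i' - i) * w) := by
          rw [Finset.prod_const, Finset.card_range,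
            ← Real.rpow_natCast (β i (μ i) ^ ((c₁/c₂) * c₁ ^ (i' - i))) w,
            ← Real.rpow_mul (hβpos i (μ i) hi1 (by omega) (hμ1 i) (hμ2 i)).le]
  -- K lower bound
  have hB : ∀ i, 1 ≤ i → i ≤ d → ∀ w, w ≤ m + 1 →
      β i (μ i) ^ (w : ℝ) ≤ Kmax m β i w := by
    intro i hi1 hid w hw
    have h0 : (0:ℕ) ≤ m + 1 - w := Nat.zero_le _
    calc β i (μ i) ^ (w:ℝ) = ∏ _t ∈ Finset.range w, β i (μ i) := by
          rw [Finset.prod_const, Finset.card_range, Real.rpow_natCast]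
      _ ≤ ∏ t ∈ Finset.range w, β i (0 + 1 + t) := by
          apply Finset.prod_le_prod
          · intro t ht
            exact (hone i hi1 hid _ (hμ1 i) (hμ2 i)).le.trans' (by norm_num)
          · intro t ht
            exact hμle i (0+1+t) (by omega) (by have := Finset.mem_range.1 ht; omega)
      _ ≤ Kmax m β i w := prod_le_Kmax m β i w 0 h0
  have hKpos : ∀ i, 1 ≤ i → i ≤ d → ∀ w, w ≤ m + 1 → 0 < Kmax m β i w := by
    intro i hi1 hid w hw
    exact lt_of_lt_of_le (Real.rpow_pos_of_pos (by linarith [hmn1 i hi1 hid]) _) (hB i hi1 hid w hw)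
  -- same length, increasing row
  have hC : ∀ i i', 1 ≤ i → i ≤ i' → i' ≤ d → ∀ w, w ≤ m + 1 →
      Kmax m β i w ≤ Kmax m β i' w := by
    intro i i' hi1 hii' hid w hw
    rcases eq_or_lt_of_le hii' with rfl | hlt
    · exact le_rfl
    · apply Kmax_le
      intro ℓ hℓ
      refine le_trans ?_ (prod_le_Kmax m β i' w ℓ hℓ)
      apply Finset.prod_le_prod
      · intro t ht
        exact (hβpos i (ℓ+1+t) hi1 (by omega) (by omega)
          (by have := Finset.mem_range.1 ht; omega)).le
      · intro t ht
        have hin : ℓ+1+t ≤ m+1 := by have := Finset.mem_range.1 ht; omega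
        exact hmono i i' hi1 hlt hid (ℓ+1+t) (ℓ+1+t) (by omega) hin (by omega) hin
  -- powered cross for K
  have hD : ∀ i i', 1 ≤ i → i < i' → i' ≤ d → ∀ w, w ≤ m + 1 →
      Kmax m β i w ^ c₂ ≤ Kmax m β i' w := by
    intro i i' hi1 hii' hid w hw
    set B := Kmax m β i' w with hBdef
    have hBpos : 0 < B := hKpos i' (by omega) hid w hw
    have h1 : Kmax m β i w ≤ B ^ (1/c₂) := by
      apply Kmax_le
      intro ℓ hℓ
      have hpos : ∀ t ∈ Finset.range w, 0 ≤ β i (ℓ+1+t) := fun t ht =>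
        (hβpos i (ℓ+1+t) hi1 (by omega) (by omega) (by have := Finset.mem_range.1 ht; omega)).le
      have hprodpos : 0 ≤ ∏ t ∈ Finset.range w, β i (ℓ + 1 + t) := Finset.prod_nonneg hpos
      have h2 : (∏ t ∈ Finset.range w, β i (ℓ + 1 + t)) ^ c₂ ≤ B := by
        rw [← Real.finset_prod_rpow _ _ hpos c₂]
        refine le_trans ?_ (prod_le_Kmax m β i' w ℓ hℓ)
        apply Finset.prod_le_prod
        · intro t ht
          exact Real.rpow_nonneg (hpos t ht) _
        · intro t ht
          have hin : ℓ+1+t ≤ m+1 := by have := Finset.mem_range.1 ht; omega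
          exact hcross i i' hi1 hii' hid (ℓ+1+t) (ℓ+1+t) (by omega) hin (by omega) hin
      calc ∏ t ∈ Finset.range w, β i (ℓ + 1 + t)
          = ((∏ t ∈ Finset.range w, β i (ℓ + 1 + t)) ^ c₂) ^ (1/c₂) := by
            rw [← Real.rpow_mul hprodpos, mul_one_div, div_self (by linarith : c₂ ≠ 0), Real.rpow_one]
        _ ≤ B ^ (1/c₂) := Real.rpow_le_rpow (Real.rpow_nonneg hprodpos _) h2 (by positivity)
    calc Kmax m β i w ^ c₂ ≤ (B ^ (1/c₂)) ^ c₂ :=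
          Real.rpow_le_rpow (hKpos i hi1 (by omega) w hw).le h1 hc₂0.le
      _ = B := by
          rw [← Real.rpow_mul hBpos.le, one_div_mul_cancel (by linarith : c₂ ≠ 0), Real.rpow_one]
  -- arithmetic on v = e / k, u = e % k
  have hkpos : 0 < k := by omega
  have hv1 : 1 ≤ e / k := (Nat.one_le_div_iff hkpos).2 he1
  have hlt : e < k * (m + 1) :=
    lt_of_le_of_lt he2 (Nat.sub_lt (Nat.mul_pos hkpos (Nat.succ_pos m)) Nat.one_pos)
  have hvm : e / k ≤ m := by
    have := Nat.div_lt_of_lt_mul hlt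
    omega
  have humod : e % k < k := Nat.mod_lt _ hkpos
  -- exponent bounds
  have hXbound : ∀ n : ℕ, n + 1 ≤ d → (c₁/c₂) * c₁ ^ n ≤ 1 + 1/(m:ℝ) := by
    intro n hn
    calc (c₁/c₂) * c₁ ^ n ≤ c₁ * c₁ ^ n :=
          mul_le_mul_of_nonneg_right (div_le_self hc₁0.le hc₂.le) (pow_nonneg hc₁0.le n)
      _ = c₁ ^ (n+1) := (pow_succ' c₁ n).symm
      _ ≤ c₁ ^ d := pow_le_pow_right₀ hc₁1.le hn
      _ = 1 + 1/(m:ℝ) := hc₁d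
  have hXc₂ : ∀ n : ℕ, n + 1 ≤ d → (c₁/c₂) * c₁ ^ n * c₂ ≤ 1 + 1/(m:ℝ) := by
    intro n hn
    have : (c₁/c₂) * c₁ ^ n * c₂ = c₁ ^ (n+1) := by
      field_simp
      ring
    rw [this, ← hc₁d]
    exact pow_le_pow_right₀ hc₁1.le hn
  have hj' := hjrange (e % k + 1) (by omega) (by omega)
  have hjq := hjrange q hq1 hq2
  have hmr : (1:ℝ) ≤ (m:ℝ) := by exact_mod_cast hm
  simp only [vq]
  by_cases hqu : q ≤ e % k
  · rw [if_pos hqu, if_neg (by omega : ¬ e % k + 1 ≤ e % k)]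
    have hjlt : j q < j (e % k + 1) := hjmono q (e % k + 1) hq1 (by omega) (by omega)
    constructor
    · simp only [Nat.add_sub_cancel]
      exact hD (j q) (j (e % k + 1)) hjq.1 hjlt hj'.2 (e / k) (by omega)
    · have hn1 : (j (e % k + 1) - j q) + 1 ≤ d := by omega
      have hexp : (c₁/c₂) * c₁ ^ (j (e % k + 1) - j q) * (e/k : ℕ) ≤ ((e/k + 1 : ℕ) : ℝ) := by
        have hX := hXbound _ hn1
        have hvr : ((e/k : ℕ):ℝ) ≤ (m:ℝ) := by exact_mod_cast hvm
        have h0v : (0:ℝ) ≤ ((e/k : ℕ):ℝ) := Nat.cast_nonneg _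
        have hmul := mul_le_mul_of_nonneg_right hX h0v
        have hdiv : 1/(m:ℝ) * ((e/k : ℕ):ℝ) ≤ 1 := by
          rw [div_mul_eq_mul_div, one_mul, div_le_one hm0]
          exact hvr
        push_cast
        nlinarith
      calc Kmax m β (j (e % k + 1)) (e / k)
          ≤ β (j q) (μ (j q)) ^ ((c₁/c₂) * c₁ ^ (j (e % k + 1) - j q) * (e/k : ℕ)) :=
            hA (j q) hjq.1 (j (e % k + 1)) hjlt.le hj'.2 (e/k) (by omega)
        _ ≤ β (j q) (μ (j q)) ^ ((e/k + 1 : ℕ) : ℝ) :=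
            Real.rpow_le_rpow_of_exponent_le (hmn1 (j q) hjq.1 hjq.2).le hexp
        _ ≤ Kmax m β (j q) (e / k + 1) := hB (j q) hjq.1 hjq.2 (e/k + 1) (by omega)
  · rw [if_neg hqu, if_neg (by omega : ¬ e % k + 1 ≤ e % k)]
    have hj'le : j (e % k + 1) ≤ j q := by
      rcases eq_or_lt_of_le (show e % k + 1 ≤ q by omega) with h | h
      · rw [h]
      · exact (hjmono (e % k + 1) q (by omega) h hq2).le
    constructor
    · have hn1 : (j q - j (e % k + 1)) + 1 ≤ d := by omega
      have hmnpos : (0:ℝ) < β (j (e % k + 1)) (μ (j (e % k + 1))) := by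
        linarith [hmn1 (j (e % k + 1)) hj'.1 hj'.2]
      have hexp : (c₁/c₂) * c₁ ^ (j q - j (e % k + 1)) * ((e/k - 1 : ℕ) : ℝ) * c₂
          ≤ ((e/k : ℕ) : ℝ) := by
        have hX := hXc₂ _ hn1
        have hvr : ((e/k : ℕ):ℝ) ≤ (m:ℝ) := by exact_mod_cast hvm
        have hcast : ((e/k - 1 : ℕ) : ℝ) = ((e/k : ℕ) : ℝ) - 1 := by
          rw [Nat.cast_sub hv1]; norm_num
        have h0v : (0:ℝ) ≤ ((e/k - 1 : ℕ):ℝ) := Nat.cast_nonneg _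
        have h1v : (1:ℝ) ≤ ((e/k : ℕ):ℝ) := by exact_mod_cast hv1
        have hmul : (c₁/c₂) * c₁ ^ (j q - j (e % k + 1)) * c₂ * ((e/k - 1 : ℕ) : ℝ)
            ≤ (1 + 1/(m:ℝ)) * ((e/k - 1 : ℕ) : ℝ) := mul_le_mul_of_nonneg_right hX h0v
        have hdiv : 1/(m:ℝ) * (((e/k : ℕ):ℝ) - 1) ≤ 1 := by
          rw [div_mul_eq_mul_div, one_mul, div_le_one hm0]
          linarith
        rw [hcast] at hmul ⊢
        nlinarith
      calc Kmax m β (j q) (e / k - 1) ^ c₂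
          ≤ (β (j (e % k + 1)) (μ (j (e % k + 1))) ^
              ((c₁/c₂) * c₁ ^ (j q - j (e % k + 1)) * ((e/k - 1 : ℕ) : ℝ))) ^ c₂ :=
            Real.rpow_le_rpow (hKpos (j q) hjq.1 hjq.2 (e/k - 1) (by omega)).le
              (hA (j (e % k + 1)) hj'.1 (j q) hj'le hjq.2 (e/k - 1) (by omega)) hc₂0.le
        _ = β (j (e % k + 1)) (μ (j (e % k + 1))) ^
              ((c₁/c₂) * c₁ ^ (j q - j (e % k + 1)) * ((e/k - 1 : ℕ) : ℝ) * c₂) := by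
            rw [← Real.rpow_mul hmnpos.le]
        _ ≤ β (j (e % k + 1)) (μ (j (e % k + 1))) ^ ((e/k : ℕ) : ℝ) :=
            Real.rpow_le_rpow_of_exponent_le (hmn1 _ hj'.1 hj'.2).le hexp
        _ ≤ Kmax m β (j (e % k + 1)) (e / k) := hB _ hj'.1 hj'.2 (e/k) (by omega)
    · exact hC (j (e % k + 1)) (j q) hj'.1 hj'le hjq.2 (e/k) (by omega)
end
end

section
/- Let d ≥ 2 be an integer, let (τ_{k,j})_{2≤k≤d, k≤j≤d} be a triangular array of positive reals, and let τ and T be respectively the minimum and the maximum of this array. Let b₁,…,b_d be reals with b₁² + … + b_d² = 1. Suppose there is a real ε with 0 < ε ≤ τ / (4(d−1)(1 + T/τ)^{d−2}) such that for every k ∈ [2,d], |Σ_{j=k}^{d} b_j τ_{k,j}| < ε. Then: |b_j| ≤ ε(1 + T/τ)^{d−2}/τ for every j ∈ [2,d]; |b₁| ≥ 3/4; and |b₁ + b₂ + … + b_d| ≥ 1/2. -/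
/-! Back substitution in the triangular system: row `k` gives
`τ |b_k| ≤ ε + T ∑_{j > k} |b_j|`, and the tail `ε + T ∑_{j ≥ k} |b_j|` grows by at most the
factor `1 + T/τ` per row, so `τ |b_k| ≤ ε (1 + T/τ)^(d-k)`. For `ε` this small the ℓ¹-norm, hence
also the ℓ²-norm, of `(b_2, …, b_d)` is at most `1/4`, and `∑ b_j² = 1` forces `|b_1| ≥ 3/4`. -/

open Finset

section BackSubstitution

variable {𝕜 : Type*} [Field 𝕜] [LinearOrder 𝕜] [IsStrictOrderedRing 𝕜]
  {A : ℕ → ℕ → 𝕜} {b : ℕ → 𝕜} {a d : ℕ} {τ T ε : 𝕜}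

theorem mul_abs_le_of_abs_row_sum_le {k : ℕ} (hk : k ≤ d) (hdiag : τ ≤ |A k k|)
    (hoff : ∀ j ∈ Icc (k + 1) d, |A k j| ≤ T) (hrow : |∑ j ∈ Icc k d, b j * A k j| ≤ ε) :
    τ * |b k| ≤ ε + T * ∑ j ∈ Icc (k + 1) d, |b j| := by
  rw [← insert_Icc_add_one_left_eq_Icc hk, sum_insert (by simp)] at hrow
  have hrest : |∑ j ∈ Icc (k + 1) d, b j * A k j| ≤ T * ∑ j ∈ Icc (k + 1) d, |b j| := by
    rw [mul_sum]
    refine (abs_sum_le_sum_abs _ _).trans (sum_le_sum fun j hj => ?_)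
    rw [abs_mul, mul_comm T]
    exact mul_le_mul_of_nonneg_left (hoff j hj) (abs_nonneg _)
  calc τ * |b k| ≤ |b k * A k k| := by
        rw [abs_mul, mul_comm]; exact mul_le_mul_of_nonneg_left hdiag (abs_nonneg _)
    _ = |(b k * A k k + ∑ j ∈ Icc (k + 1) d, b j * A k j) - ∑ j ∈ Icc (k + 1) d, b j * A k j| := by
        rw [add_sub_cancel_right]
    _ ≤ ε + T * ∑ j ∈ Icc (k + 1) d, |b j| := (abs_sub _ _).trans (add_le_add hrow hrest)

theorem mul_abs_le_mul_pow_of_triangular (hτ : 0 < τ) (hT : 0 ≤ T)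
    (hdiag : ∀ k, a ≤ k → k ≤ d → τ ≤ |A k k|)
    (hoff : ∀ k j, a ≤ k → k < j → j ≤ d → |A k j| ≤ T)
    (hrow : ∀ k, a ≤ k → k ≤ d → |∑ j ∈ Icc k d, b j * A k j| ≤ ε)
    {k : ℕ} (hak : a ≤ k) (hkd : k ≤ d) :
    τ * |b k| ≤ ε * (1 + T / τ) ^ (d - k) := by
  have hrow' : ∀ k, a ≤ k → k ≤ d → τ * |b k| ≤ ε + T * ∑ j ∈ Icc (k + 1) d, |b j| :=
    fun k hak hkd => mul_abs_le_of_abs_row_sum_le hkd (hdiag k hak hkd)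
      (fun j hj => hoff k j hak (by simp at hj; omega) (by simp at hj; omega)) (hrow k hak hkd)
  have htail : ∀ k ≤ d + 1, a ≤ k →
      ε + T * ∑ j ∈ Icc k d, |b j| ≤ ε * (1 + T / τ) ^ (d + 1 - k) := by
    intro k hk
    induction hk using Nat.decreasingInduction with
    | self => simp
    | of_succ k hk ih =>
      intro hak
      have hkd : k ≤ d := by omega
      have hstep := hrow' k hak hkd
      have ih := ih (by omega)
      rw [← insert_Icc_add_one_left_eq_Icc hkd, sum_insert (by simp),
        show d + 1 - k = d + 1 - (k + 1) + 1 by omega, pow_succ, ← mul_assoc]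
      set S := ∑ j ∈ Icc (k + 1) d, |b j|
      calc ε + T * (|b k| + S) = (ε + T * S) + T / τ * (τ * |b k|) := by
            field_simp; ring
        _ ≤ (ε + T * S) + T / τ * (ε + T * S) := by gcongr
        _ = (ε + T * S) * (1 + T / τ) := by ring
        _ ≤ ε * (1 + T / τ) ^ (d + 1 - (k + 1)) * (1 + T / τ) := by gcongr
  simpa using (hrow' k hak hkd).trans (htail (k + 1) (by omega) (by omega))

end BackSubstitution

section UnitVector

variable {𝕜 ι : Type*} [Field 𝕜] [LinearOrder 𝕜] [IsStrictOrderedRing 𝕜] [DecidableEq ι]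
  {s : Finset ι} {i : ι} {b : ι → 𝕜}

theorem three_quarters_le_abs_of_sum_sq_eq_one (hi : i ∉ s)
    (hb : ∑ j ∈ insert i s, b j ^ 2 = 1) (hs : ∑ j ∈ s, |b j| ≤ 1 / 4) : 3 / 4 ≤ |b i| := by
  rw [sum_insert hi] at hb
  have hsq : ∑ j ∈ s, b j ^ 2 ≤ 1 / 16 :=
    calc ∑ j ∈ s, b j ^ 2 = ∑ j ∈ s, |b j| ^ 2 := by simp only [sq_abs]
      _ ≤ (∑ j ∈ s, |b j|) ^ 2 := sum_sq_le_sq_sum_of_nonneg fun j _ => abs_nonneg (b j)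
      _ ≤ (1 / 4) ^ 2 := by gcongr
      _ = 1 / 16 := by norm_num
  nlinarith [abs_nonneg (b i), sq_abs (b i)]

theorem half_le_abs_sum_of_sum_sq_eq_one (hi : i ∉ s)
    (hb : ∑ j ∈ insert i s, b j ^ 2 = 1) (hs : ∑ j ∈ s, |b j| ≤ 1 / 4) :
    1 / 2 ≤ |∑ j ∈ insert i s, b j| := by
  have hbi := three_quarters_le_abs_of_sum_sq_eq_one hi hb hs
  have hrest := (abs_sum_le_sum_abs b s).trans hs
  rw [sum_insert hi]
  linarith [abs_sub_abs_le_abs_add (b i) (∑ j ∈ s, b j)]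

end UnitVector

/-- Quantitative lemma: if `b₁² + ⋯ + b_d² = 1` and all the sums `Σ_{j=k}^d b_j τ_{k,j}`
(`k ∈ [2,d]`) are smaller than `ε ≤ τ / (4(d-1)(1 + T/τ)^{d-2})` in absolute value, where
`τ` and `T` are the minimum and maximum of the positive array `(τ_{k,j})_{2≤k≤d, k≤j≤d}`,
then `|b_j| ≤ ε (1 + T/τ)^{d-2} / τ` for `j ∈ [2,d]`, `|b₁| ≥ 3/4` and
`|b₁ + ⋯ + b_d| ≥ 1/2`. -/
theorem small_coefficients_lemma (d : ℕ) (hd : 2 ≤ d)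
    (τmat : ℕ → ℕ → ℝ)
    (hpos : ∀ k j, 2 ≤ k → k ≤ j → j ≤ d → 0 < τmat k j)
    (τ T : ℝ)
    (hτ : IsLeast {x : ℝ | ∃ k j, 2 ≤ k ∧ k ≤ j ∧ j ≤ d ∧ x = τmat k j} τ)
    (hT : IsGreatest {x : ℝ | ∃ k j, 2 ≤ k ∧ k ≤ j ∧ j ≤ d ∧ x = τmat k j} T)
    (b : ℕ → ℝ) (hb : ∑ j ∈ Finset.Icc 1 d, (b j) ^ 2 = 1)
    (ε : ℝ) (hε : 0 < ε)
    (hε' : ε ≤ τ / (4 * ((d : ℝ) - 1) * (1 + T / τ) ^ (d - 2)))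
    (hsmall : ∀ k, 2 ≤ k → k ≤ d → |∑ j ∈ Finset.Icc k d, b j * τmat k j| < ε) :
    (∀ j, 2 ≤ j → j ≤ d → |b j| ≤ ε * (1 + T / τ) ^ (d - 2) / τ) ∧
      3 / 4 ≤ |b 1| ∧ 1 / 2 ≤ |∑ j ∈ Finset.Icc 1 d, b j| := by
  obtain ⟨⟨k₀, j₀, hk₀, hkj₀, hj₀, hτ₀⟩, hτle⟩ := hτ
  have hτpos : 0 < τ := hτ₀ ▸ hpos k₀ j₀ hk₀ hkj₀ hj₀
  have hentry : ∀ k j, 2 ≤ k → k ≤ j → j ≤ d → τ ≤ |τmat k j| ∧ |τmat k j| ≤ T :=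
    fun k j hk hkj hjd => by
      rw [abs_of_pos (hpos k j hk hkj hjd)]
      exact ⟨hτle ⟨k, j, hk, hkj, hjd, rfl⟩, hT.2 ⟨k, j, hk, hkj, hjd, rfl⟩⟩
  have hT₀ : 0 ≤ T := hτpos.le.trans (hT.2 ⟨k₀, j₀, hk₀, hkj₀, hj₀, hτ₀⟩)
  have hbound : ∀ j, 2 ≤ j → j ≤ d → |b j| ≤ ε * (1 + T / τ) ^ (d - 2) / τ := by
    intro j hj hjd
    have := mul_abs_le_mul_pow_of_triangular hτpos hT₀
      (fun k hk hkd => (hentry k k hk le_rfl hkd).1)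
      (fun k j hk hkj hjd => (hentry k j hk hkj.le hjd).2)
      (fun k hk hkd => (hsmall k hk hkd).le) hj hjd
    rw [le_div_iff₀ hτpos, mul_comm]
    exact this.trans (by gcongr; exact le_add_of_nonneg_right (by positivity))
  have htail : ∑ j ∈ Icc 2 d, |b j| ≤ 1 / 4 := by
    have hd₁ : (1 : ℝ) ≤ d - 1 := by
      have : (2 : ℝ) ≤ d := by exact_mod_cast hd
      linarith
    rw [le_div_iff₀ (by positivity)] at hε'
    calc ∑ j ∈ Icc 2 d, |b j| ≤ #(Icc 2 d) • (ε * (1 + T / τ) ^ (d - 2) / τ) :=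
          sum_le_card_nsmul _ _ _ fun j hj => hbound j (mem_Icc.1 hj).1 (mem_Icc.1 hj).2
      _ = ((d : ℝ) - 1) * (ε * (1 + T / τ) ^ (d - 2) / τ) := by
          rw [Nat.card_Icc, nsmul_eq_mul, Nat.cast_sub (by omega)]; push_cast; ring
      _ ≤ 1 / 4 := by
          rw [mul_div_assoc', div_le_iff₀ hτpos]; linarith
  rw [← insert_Icc_add_one_left_eq_Icc (by omega : 1 ≤ d)] at hb ⊢
  exact ⟨hbound, three_quarters_le_abs_of_sum_sq_eq_one (by simp) hb htail,
    half_le_abs_sum_of_sum_sq_eq_one (by simp) hb htail⟩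
end
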